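/- arXiv:2301.07413 — 8 statements merged into one kernel-verified Lean document; each statement's English description precedes it below -/
import Mathlib

section
/- If 𝒜 is a T₀-family, then every uncountable subset of ω₁ contains a two-element subset belonging to 𝒜. -/
noncomputable section

/-- The set `ω₁` of countable ordinals, as a type. -/
abbrev Omega1 : Type := (Ordinal.omega 1).ToType

/-- `‖x‖_𝒜 = sup_{A ∈ 𝒜} sqrt (Σ_{α ∈ A} x(α)²)`. -/
def normA (𝒜 : Set (Finset Omega1)) (x : Omega1 → ℝ) : ℝ :=
  sSup {r : ℝ | ∃ A ∈ 𝒜, r = Real.sqrt (∑ α ∈ A, (x α) ^ 2)}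

/-- The supremum norm of `x`. -/
def supNorm (x : Omega1 → ℝ) : ℝ :=
  sSup {r : ℝ | ∃ α : Omega1, r = |x α|}

/-- The ℓ₂ norm of a (finitely supported) `x`. -/
def l2Norm (x : Omega1 → ℝ) : ℝ :=
  Real.sqrt (∑ᶠ α : Omega1, (x α) ^ 2)

/-- `𝒜` is a family of finite subsets of `ω₁` closed under subsets
and containing all singletons. -/
def IsGoodFamily (𝒜 : Set (Finset Omega1)) : Prop :=
  (∀ A ∈ 𝒜, ∀ B : Finset Omega1, B ⊆ A → B ∈ 𝒜) ∧
    ∀ α : Omega1, ({α} : Finset Omega1) ∈ 𝒜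

/-- `{{a ξ, b ξ} : ξ < ω₁}` is an (uncountable) family of pairwise disjoint pairs. -/
def PairwiseDisjointPairs (a b : Omega1 → Omega1) : Prop :=
  (∀ ξ : Omega1, a ξ ≠ b ξ) ∧
    ∀ ξ η : Omega1, ξ ≠ η →
      ({a ξ, b ξ} : Set Omega1) ∩ ({a η, b η} : Set Omega1) = ∅

/-- `𝒜, ℬ` are T-families. -/
def IsTFamilies (𝒜 ℬ : Set (Finset Omega1)) : Prop :=
  (∀ A ∈ 𝒜, ∀ B : Finset Omega1, B ⊆ A → B ∈ 𝒜) ∧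
  (∀ A ∈ ℬ, ∀ B : Finset Omega1, B ⊆ A → B ∈ ℬ) ∧
  (∀ α : Omega1, ∃ A ∈ 𝒜, α ∈ A) ∧
  (∀ A ∈ 𝒜 ∩ ℬ, A.card ≤ 1) ∧
  (∀ a b : Omega1 → Omega1, PairwiseDisjointPairs a b → ∀ k : ℕ,
    ∃ s : Finset Omega1, s.card = k ∧
      (s.image a ∈ 𝒜) ∧ (s.image b ∈ ℬ) ∧
      Set.InjOn a ↑s ∧ Set.InjOn b ↑s)

/-- `𝒜` is a T₀-family: it is part of a pair of T-families. -/
def IsT0Family (𝒜 : Set (Finset Omega1)) : Prop :=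
  ∃ ℬ : Set (Finset Omega1), IsTFamilies 𝒜 ℬ

open Cardinal in
/-- if `𝒜` is a T₀-family then every uncountable subset of `ω₁`
contains a two-element subset belonging to `𝒜`. -/
theorem stmt6 (𝒜 : Set (Finset Omega1)) (h𝒜 : IsT0Family 𝒜)
    (S : Set Omega1) (hS : ¬ S.Countable) :
    ∃ α ∈ S, ∃ β ∈ S, α ≠ β ∧ ({α, β} : Finset Omega1) ∈ 𝒜 := by
  obtain ⟨ℬ, _, _, _, _, hT⟩ := h𝒜
  -- cardinality facts
  have hmk : (#Omega1) = Cardinal.aleph 1 := by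
    rw [Cardinal.mk_toType, Ordinal.card_omega]
  have hS1 : Cardinal.aleph 1 ≤ #S := by
    by_contra h
    exact hS ((Cardinal.countable_iff_lt_aleph_one S).mpr (lt_of_not_ge h))
  have hle : #(Omega1 × Bool) ≤ #S := by
    rw [Cardinal.mk_prod, Cardinal.lift_id, Cardinal.lift_id, Cardinal.mk_bool, hmk]
    calc Cardinal.aleph 1 * 2 = Cardinal.aleph 1 := by
          refine Cardinal.mul_eq_left (Cardinal.aleph0_le_aleph 1) ?_ (by norm_num)
          exact le_trans (by exact_mod_cast (Cardinal.nat_lt_aleph0 2).le) (Cardinal.aleph0_le_aleph 1)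
      _ ≤ #S := hS1
  obtain ⟨f⟩ := Cardinal.le_def _ _ |>.mp hle
  set a : Omega1 → Omega1 := fun ξ => (f (ξ, false) : Omega1) with ha
  set b : Omega1 → Omega1 := fun ξ => (f (ξ, true) : Omega1) with hb
  have haS : ∀ ξ, a ξ ∈ S := fun ξ => (f (ξ, false)).2
  have hbS : ∀ ξ, b ξ ∈ S := fun ξ => (f (ξ, true)).2
  have hinj : ∀ p q : Omega1 × Bool, (f p : Omega1) = (f q : Omega1) → p = q := by
    intro p q h
    exact f.injective (Subtype.ext h)
  have hpdp : PairwiseDisjointPairs a b := by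
    constructor
    · intro ξ h
      have := hinj _ _ h
      simp at this
    · intro ξ η hne
      ext x
      simp only [Set.mem_inter_iff, Set.mem_insert_iff, Set.mem_singleton_iff,
        Set.mem_empty_iff_false, iff_false, not_and]
      rintro (h1 | h1) (h2 | h2) <;>
        · exact hne (congrArg Prod.fst (hinj _ _ (h1.symm.trans h2)))
  obtain ⟨s, hcard, hsA, -, hinjA, -⟩ := hT a b hpdp 2
  obtain ⟨ξ, η, hξη, rfl⟩ := Finset.card_eq_two.mp hcard
  have hξ : ξ ∈ ({ξ, η} : Finset Omega1) := by simp
  have hη : η ∈ ({ξ, η} : Finset Omega1) := by simp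
  refine ⟨a ξ, haS ξ, a η, haS η, ?_, ?_⟩
  · intro h
    exact hξη (hinjA (by simp) (by simp) h)
  · have : ({ξ, η} : Finset Omega1).image a = {a ξ, a η} := by
      simp [Finset.image_insert]
    rwa [this] at hsA
end
end

section
/- Let 𝒜 be a T₀-family. Suppose (A_α)_{α<ω₁} is a transfinite sequence of nonempty countable subsets of ω₁ such that each A_α is maximal with the property that every finite subset of A_α in 𝒜 is a singleton or empty, and the A_α are separated (sup A_α < min A_β for α < β). For each α choose x_α supported exactly on A_α with x_α(min A_α) = 1 and |x_α(γ)| ≤ 1 for all γ. Then ‖x_α‖_𝒜 = 1 for all α, and ‖x_α − x_β‖_𝒜 > 1 for all α < β < ω₁; hence the unit sphere of the SW-space X_𝒜 admits an uncountable (1+)-separated set. -/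
noncomputable section

/-- the construction of an uncountable `(1+)`-separated subset of the
unit sphere of an SW-space from maximal `𝒜`-free separated sets `A_α`. -/
theorem stmt7 (𝒜 : Set (Finset Omega1)) (h𝒜 : IsT0Family 𝒜)
    (A : Omega1 → Set Omega1)
    (hne : ∀ α, (A α).Nonempty) (hct : ∀ α, (A α).Countable)
    (hsep : ∀ α β : Omega1, α < β → ∀ x ∈ A α, ∀ y ∈ A β, x < y)
    (hfree : ∀ α, ∀ s : Finset Omega1, ↑s ⊆ A α → s ∈ 𝒜 → s.card ≤ 1)
    (hmax : ∀ α, ∀ ξ : Omega1, ξ ∉ A α → (∀ β, β < α → ∀ y ∈ A β, y < ξ) →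
      ∃ s : Finset Omega1, ↑s ⊆ A α ∪ {ξ} ∧ s ∈ 𝒜 ∧ 2 ≤ s.card)
    (x : Omega1 → Omega1 → ℝ)
    (hsupp : ∀ α, Function.support (x α) = A α)
    (m : Omega1 → Omega1)
    (hm : ∀ α, m α ∈ A α ∧ ∀ y ∈ A α, m α ≤ y)
    (hx1 : ∀ α, x α (m α) = 1)
    (hxb : ∀ α γ, |x α γ| ≤ 1) :
    (∀ α, normA 𝒜 (x α) = 1) ∧
      ∀ α β : Omega1, α < β → 1 < normA 𝒜 (x α - x β) := by
  classical
  obtain ⟨ℬ, hAsub, _, hcover, _, _⟩ := h𝒜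
  have hsing : ∀ γ : Omega1, ({γ} : Finset Omega1) ∈ 𝒜 := by
    intro γ
    obtain ⟨B, hB, hγ⟩ := hcover γ
    exact hAsub B hB {γ} (by simpa using hγ)
  -- each term's square is ≤ 1
  have hsq : ∀ α γ, (x α γ) ^ 2 ≤ 1 := by
    intro α γ
    nlinarith [hxb α γ, abs_nonneg (x α γ), sq_abs (x α γ)]
  -- key sum bound: for any B ∈ 𝒜, ∑_{γ∈B} (x α γ)^2 ≤ 1
  have hsum : ∀ α, ∀ B ∈ 𝒜, (∑ γ ∈ B, (x α γ) ^ 2) ≤ 1 := by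
    intro α B hB
    have heq : (∑ γ ∈ B.filter (fun γ => γ ∈ A α), (x α γ) ^ 2)
        = ∑ γ ∈ B, (x α γ) ^ 2 := by
      apply Finset.sum_filter_of_ne
      intro γ _ hne0
      have : x α γ ≠ 0 := by
        intro h0; exact hne0 (by simp [h0])
      have : γ ∈ Function.support (x α) := this
      rwa [hsupp α] at this
    have hcard : (B.filter (fun γ => γ ∈ A α)).card ≤ 1 := by
      apply hfree α
      · intro γ hγ
        exact (Finset.mem_filter.1 (by simpa using hγ)).2
      · exact hAsub B hB _ (Finset.filter_subset _ _)
    calc (∑ γ ∈ B, (x α γ) ^ 2)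
        = ∑ γ ∈ B.filter (fun γ => γ ∈ A α), (x α γ) ^ 2 := heq.symm
      _ ≤ ∑ _γ ∈ B.filter (fun γ => γ ∈ A α), (1 : ℝ) :=
          Finset.sum_le_sum (fun γ _ => hsq α γ)
      _ = (B.filter (fun γ => γ ∈ A α)).card := by simp
      _ ≤ 1 := by exact_mod_cast hcard
  have hpart1 : ∀ α, normA 𝒜 (x α) = 1 := by
    intro α
    have hub : ∀ r ∈ {r : ℝ | ∃ B ∈ 𝒜, r = Real.sqrt (∑ γ ∈ B, (x α γ) ^ 2)}, r ≤ 1 := by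
      rintro r ⟨B, hB, rfl⟩
      exact Real.sqrt_le_one.2 (hsum α B hB)
    have hmem : (1 : ℝ) ∈ {r : ℝ | ∃ B ∈ 𝒜, r = Real.sqrt (∑ γ ∈ B, (x α γ) ^ 2)} := by
      refine ⟨{m α}, hsing (m α), ?_⟩
      simp [hx1 α]
    refine le_antisymm (Real.sSup_le hub zero_le_one) (le_csSup ⟨1, hub⟩ hmem)
  refine ⟨hpart1, ?_⟩
  intro α β hαβ
  set y : Omega1 → ℝ := x α - x β with hy
  have hyγ : ∀ γ, y γ = x α γ - x β γ := fun γ => rfl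
  -- support facts
  have hzero : ∀ δ γ, γ ∉ A δ → x δ γ = 0 := by
    intro δ γ hγ
    by_contra h0
    exact hγ (by rw [← hsupp δ]; exact h0)
  -- boundedness of the set of values
  have hub : ∀ r ∈ {r : ℝ | ∃ B ∈ 𝒜, r = Real.sqrt (∑ γ ∈ B, (y γ) ^ 2)}, r ≤ 2 := by
    rintro r ⟨B, hB, rfl⟩
    have h1 : (∑ γ ∈ B, (y γ) ^ 2) ≤ ∑ γ ∈ B, (2 * (x α γ) ^ 2 + 2 * (x β γ) ^ 2) := by
      apply Finset.sum_le_sum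
      intro γ _
      rw [hyγ]
      nlinarith [sq_nonneg (x α γ + x β γ)]
    have h2 : (∑ γ ∈ B, (2 * (x α γ) ^ 2 + 2 * (x β γ) ^ 2)) ≤ 4 := by
      rw [Finset.sum_add_distrib, ← Finset.mul_sum, ← Finset.mul_sum]
      nlinarith [hsum α B hB, hsum β B hB]
    calc Real.sqrt (∑ γ ∈ B, (y γ) ^ 2) ≤ Real.sqrt 4 := Real.sqrt_le_sqrt (h1.trans h2)
      _ = 2 := by
          rw [show (4 : ℝ) = 2 ^ 2 by norm_num, Real.sqrt_sq (by norm_num)]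
  -- apply maximality with ξ = m β
  set ξ := m β with hξdef
  have hξβ : ξ ∈ A β := (hm β).1
  have hξnot : ξ ∉ A α := by
    intro h
    exact lt_irrefl ξ (hsep α β hαβ ξ h ξ hξβ)
  obtain ⟨s, hs_sub, hs_mem, hs_card⟩ := hmax α ξ hξnot
    (fun δ hδ z hz => hsep δ β (hδ.trans hαβ) z hz ξ hξβ)
  have hξs : ξ ∈ s := by
    by_contra h
    have : ↑s ⊆ A α := by
      intro γ hγ
      rcases hs_sub hγ with h1 | h1
      · exact h1
      · rw [Set.mem_singleton_iff.1 h1] at hγ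
        exact absurd (by exact_mod_cast hγ) h
    have := hfree α s this hs_mem
    omega
  -- pick γ ∈ s, γ ≠ ξ
  obtain ⟨γ, hγs, hγξ⟩ : ∃ γ ∈ s, γ ≠ ξ := by
    by_contra h
    push_neg at h
    have : s ⊆ {ξ} := fun z hz => Finset.mem_singleton.2 (h z hz)
    have := Finset.card_le_card this
    simp at this
    omega
  have hγα : γ ∈ A α := by
    rcases hs_sub hγs with h1 | h1
    · exact h1
    · exact absurd (Set.mem_singleton_iff.1 h1) hγξ
  have hγβ : γ ∉ A β := by
    intro h
    exact lt_irrefl γ (hsep α β hαβ γ hγα γ h)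
  -- values
  have hyξ : y ξ = -1 := by
    rw [hyγ, hzero α ξ hξnot, hx1 β]; ring
  have hyγv : y γ = x α γ := by
    rw [hyγ, hzero β γ hγβ]; ring
  have hxγ : x α γ ≠ 0 := by
    rw [← hsupp α] at hγα; exact hγα
  have hsum2 : (1 : ℝ) + (x α γ) ^ 2 ≤ ∑ δ ∈ s, (y δ) ^ 2 := by
    have hpair : ({ξ, γ} : Finset Omega1) ⊆ s := by
      intro z hz
      rcases Finset.mem_insert.1 hz with rfl | hz
      · exact hξs
      · rw [Finset.mem_singleton.1 hz]; exact hγs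
    have := Finset.sum_le_sum_of_subset_of_nonneg hpair
      (fun δ _ _ => sq_nonneg (y δ))
    rwa [Finset.sum_pair (fun h => hγξ h.symm), hyξ, hyγv, neg_one_sq] at this
  have hlt : 1 < Real.sqrt (∑ δ ∈ s, (y δ) ^ 2) := by
    have h0 : 0 < (x α γ) ^ 2 :=
      lt_of_le_of_ne (sq_nonneg _)
        (fun h => hxγ ((pow_eq_zero_iff (by norm_num)).1 h.symm))
    have h1 : (1 : ℝ) < 1 + (x α γ) ^ 2 := by linarith
    have : (1 : ℝ) < ∑ δ ∈ s, (y δ) ^ 2 := lt_of_lt_of_le h1 hsum2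
    calc (1 : ℝ) = Real.sqrt 1 := Real.sqrt_one.symm
      _ < Real.sqrt (∑ δ ∈ s, (y δ) ^ 2) := Real.sqrt_lt_sqrt zero_le_one this
  have hmem : Real.sqrt (∑ δ ∈ s, (y δ) ^ 2)
      ∈ {r : ℝ | ∃ B ∈ 𝒜, r = Real.sqrt (∑ γ ∈ B, (y γ) ^ 2)} :=
    ⟨s, hs_mem, rfl⟩
  exact lt_of_lt_of_le hlt (le_csSup ⟨2, hub⟩ hmem)
end
end

section
/- Let 𝒜 be a family of finite subsets of ω₁ closed under subsets. Suppose {p_α : α < ω₁} is an uncountable family of pairwise disjoint finite subsets of ω₁, each of the same cardinality, such that (i) no p_α contains a two-element subset in 𝒜, and (ii) for all α ≠ β there exist ξ ∈ p_α and η ∈ p_β with {ξ, η} ∈ 𝒜. Then the characteristic functions 𝟙_{p_α} lie on the unit sphere of (c_00(ω₁), ‖·‖_𝒜) and form an uncountable √2-equilateral set, i.e. ‖𝟙_{p_α} − 𝟙_{p_β}‖_𝒜 = √2 for all α ≠ β. -/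
noncomputable section

instance : Nontrivial Omega1 := by
  rw [← Cardinal.one_lt_iff_nontrivial, Cardinal.mk_toType, Ordinal.card_omega]
  exact lt_trans Cardinal.one_lt_aleph0 Cardinal.aleph0_lt_aleph_one

/-- If `s` contains no 2-element member of `𝒜`, then any `A ∈ 𝒜` meets `s`
in at most one point. -/
lemma inter_card_le (𝒜 : Set (Finset Omega1)) (h𝒜 : IsGoodFamily 𝒜)
    (s : Finset Omega1)
    (hfree : ∀ ξ ∈ s, ∀ η ∈ s, ξ ≠ η → ({ξ, η} : Finset Omega1) ∉ 𝒜)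
    {A : Finset Omega1} (hA : A ∈ 𝒜) : (A ∩ s).card ≤ 1 := by
  by_contra h
  push_neg at h
  obtain ⟨ξ, hξ, η, hη, hne⟩ := Finset.one_lt_card.mp h
  simp only [Finset.mem_inter] at hξ hη
  refine hfree ξ hξ.2 η hη.2 hne (h𝒜.1 A hA {ξ, η} ?_)
  intro x hx
  simp only [Finset.mem_insert, Finset.mem_singleton] at hx
  rcases hx with rfl | rfl
  exacts [hξ.1, hη.1]

lemma sum_sq_indicator (s A : Finset Omega1) :
    ∑ γ ∈ A, ((↑s : Set Omega1).indicator (fun _ => (1 : ℝ)) γ) ^ 2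
      = (A ∩ s).card := by
  rw [← Finset.filter_mem_eq_inter]
  rw [Finset.card_filter]
  push_cast
  refine Finset.sum_congr rfl fun γ _ => ?_
  by_cases h : γ ∈ s <;> simp [Set.indicator_apply, h]

lemma sum_sq_diff (s t A : Finset Omega1) (hst : Disjoint s t) :
    ∑ γ ∈ A, (((↑s : Set Omega1).indicator (fun _ => (1 : ℝ)) -
        (↑t : Set Omega1).indicator (fun _ => (1 : ℝ))) γ) ^ 2
      = (A ∩ s).card + (A ∩ t).card := by
  have key : ∀ γ ∈ A, (((↑s : Set Omega1).indicator (fun _ => (1 : ℝ)) -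
        (↑t : Set Omega1).indicator (fun _ => (1 : ℝ))) γ) ^ 2
      = ((↑s : Set Omega1).indicator (fun _ => (1 : ℝ)) γ) ^ 2 +
        ((↑t : Set Omega1).indicator (fun _ => (1 : ℝ)) γ) ^ 2 := by
    intro γ _
    by_cases hs : γ ∈ s
    · have ht : γ ∉ t := Finset.disjoint_left.mp hst hs
      simp [Set.indicator_apply, hs, ht]
    · by_cases ht : γ ∈ t <;> simp [Set.indicator_apply, hs, ht]
  rw [Finset.sum_congr rfl key, Finset.sum_add_distrib, sum_sq_indicator,
    sum_sq_indicator]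

/-- an uncountable antichain of `𝒜`-free finite sets yields an
uncountable `√2`-equilateral set of characteristic functions on the unit sphere. -/
theorem stmt8 (𝒜 : Set (Finset Omega1)) (h𝒜 : IsGoodFamily 𝒜)
    (p : Omega1 → Finset Omega1) (k : ℕ)
    (hcard : ∀ α, (p α).card = k)
    (hdisj : ∀ α β : Omega1, α ≠ β → Disjoint (p α) (p β))
    (hfree : ∀ α, ∀ ξ ∈ p α, ∀ η ∈ p α, ξ ≠ η → ({ξ, η} : Finset Omega1) ∉ 𝒜)
    (hlink : ∀ α β : Omega1, α ≠ β →
      ∃ ξ ∈ p α, ∃ η ∈ p β, ({ξ, η} : Finset Omega1) ∈ 𝒜) :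
    (∀ α, normA 𝒜 ((↑(p α) : Set Omega1).indicator fun _ => (1 : ℝ)) = 1) ∧
      ∀ α β : Omega1, α ≠ β →
        normA 𝒜 (((↑(p α) : Set Omega1).indicator fun _ => (1 : ℝ)) -
            ((↑(p β) : Set Omega1).indicator fun _ => (1 : ℝ))) = Real.sqrt 2 := by
  constructor
  · intro α
    obtain ⟨β, hβ⟩ := exists_ne α
    obtain ⟨ξ, hξ, η, hη, _⟩ := hlink α β (Ne.symm hβ)
    apply le_antisymm
    · apply Real.sSup_le
      · rintro r ⟨A, hA, rfl⟩
        rw [sum_sq_indicator]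
        have h1 : ((A ∩ p α).card : ℝ) ≤ 1 := by
          exact_mod_cast inter_card_le 𝒜 h𝒜 (p α) (hfree α) hA
        calc Real.sqrt ((A ∩ p α).card : ℝ) ≤ Real.sqrt 1 := Real.sqrt_le_sqrt h1
          _ = 1 := Real.sqrt_one
      · norm_num
    · apply le_csSup
      · refine ⟨1, ?_⟩
        rintro r ⟨A, hA, rfl⟩
        rw [sum_sq_indicator]
        have h1 : ((A ∩ p α).card : ℝ) ≤ 1 := by
          exact_mod_cast inter_card_le 𝒜 h𝒜 (p α) (hfree α) hA
        calc Real.sqrt ((A ∩ p α).card : ℝ) ≤ Real.sqrt 1 := Real.sqrt_le_sqrt h1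
          _ = 1 := Real.sqrt_one
      · refine ⟨{ξ}, h𝒜.2 ξ, ?_⟩
        rw [sum_sq_indicator]
        have : ({ξ} ∩ p α : Finset Omega1) = {ξ} := by
          rw [Finset.inter_eq_left]; simpa using hξ
        rw [this]
        simp
  · intro α β hαβ
    obtain ⟨ξ, hξ, η, hη, hA⟩ := hlink α β hαβ
    have hd := hdisj α β hαβ
    have hbound : ∀ r ∈ {r : ℝ | ∃ A ∈ 𝒜, r =
        Real.sqrt (∑ γ ∈ A, ((((↑(p α) : Set Omega1).indicator fun _ => (1 : ℝ)) -
          ((↑(p β) : Set Omega1).indicator fun _ => (1 : ℝ))) γ) ^ 2)},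
        r ≤ Real.sqrt 2 := by
      rintro r ⟨A, hAmem, rfl⟩
      rw [sum_sq_diff _ _ _ hd]
      apply Real.sqrt_le_sqrt
      have h1 : ((A ∩ p α).card : ℝ) ≤ 1 := by
        exact_mod_cast inter_card_le 𝒜 h𝒜 (p α) (hfree α) hAmem
      have h2 : ((A ∩ p β).card : ℝ) ≤ 1 := by
        exact_mod_cast inter_card_le 𝒜 h𝒜 (p β) (hfree β) hAmem
      linarith
    apply le_antisymm
    · exact Real.sSup_le hbound (Real.sqrt_nonneg 2)
    · apply le_csSup ⟨Real.sqrt 2, hbound⟩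
      refine ⟨{ξ, η}, hA, ?_⟩
      rw [sum_sq_diff _ _ _ hd]
      have hne : ξ ≠ η := fun h => Finset.disjoint_left.mp hd hξ (h ▸ hη)
      have h1 : ({ξ, η} ∩ p α : Finset Omega1) = {ξ} := by
        ext x
        simp only [Finset.mem_inter, Finset.mem_insert, Finset.mem_singleton]
        constructor
        · rintro ⟨rfl | rfl, hx⟩
          · rfl
          · exact absurd hx (Finset.disjoint_right.mp hd hη)
        · rintro rfl; exact ⟨Or.inl rfl, hξ⟩
      have h2 : ({ξ, η} ∩ p β : Finset Omega1) = {η} := by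
        ext x
        simp only [Finset.mem_inter, Finset.mem_insert, Finset.mem_singleton]
        constructor
        · rintro ⟨rfl | rfl, hx⟩
          · exact absurd hx (Finset.disjoint_left.mp hd hξ)
          · rfl
        · rintro rfl; exact ⟨Or.inr rfl, hη⟩
      rw [h1, h2]
      norm_num
end
end

section
/- Assume Martin's axiom and the negation of the continuum hypothesis, and let 𝒜 be a T₀-family. Then the partial order ℙ of finite subsets p of ω₁ such that all elements of 𝒜 contained in p are singletons or empty, ordered by reverse inclusion, is not c.c.c.; consequently there exists an uncountable family of finite subsets of ω₁, none containing a pair from 𝒜, such that the union of any two distinct members contains a pair from 𝒜. -/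
noncomputable section

/-- A partial order is c.c.c. if every antichain is countable. -/
def IsCCC (P : Type) [Preorder P] : Prop :=
  ∀ A : Set P, (∀ p ∈ A, ∀ q ∈ A, p ≠ q → ¬ ∃ r : P, r ≤ p ∧ r ≤ q) →
    A.Countable

/-- Martin's axiom: for every nonempty c.c.c. partial order and every family of
fewer than continuum many dense sets there is a filter meeting them all. -/
def MartinsAxiom : Prop :=
  ∀ (P : Type) (inst : PartialOrder P), Nonempty P →
    (@IsCCC P inst.toPreorder) →
    ∀ D : Set (Set P), Cardinal.mk D < Cardinal.continuum →
      (∀ d ∈ D, ∀ p : P, ∃ q ∈ d, inst.le q p) →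
      ∃ G : Set P,
        (∀ p ∈ G, ∀ q ∈ G, ∃ r ∈ G, inst.le r p ∧ inst.le r q) ∧
        (∀ p ∈ G, ∀ q : P, inst.le p q → q ∈ G) ∧
        ∀ d ∈ D, (G ∩ d).Nonempty

/-- The partial order `ℙ` of finite `𝒜`-free subsets of `ω₁`,
ordered by reverse inclusion. -/
def PP (𝒜 : Set (Finset Omega1)) : Type :=
  {p : Finset Omega1 // ∀ s : Finset Omega1, ↑s ⊆ (↑p : Set Omega1) → s ∈ 𝒜 → s.card ≤ 1}

instance (𝒜 : Set (Finset Omega1)) : Preorder (PP 𝒜) where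
  le p q := q.1 ⊆ p.1
  le_refl p := Finset.Subset.refl _
  le_trans p q r h1 h2 := Finset.Subset.trans h2 h1

/-! ### Auxiliary lemmas about `Omega1` -/

instance myWO : IsWellOrder Omega1 (· < ·) := isWellOrder_lt

lemma mk_Omega1 : Cardinal.mk Omega1 = Cardinal.aleph 1 := by
  rw [Cardinal.mk_toType, Ordinal.card_omega]

lemma not_countable_univ_Omega1 : ¬ (Set.univ : Set Omega1).Countable := by
  rw [Cardinal.countable_iff_lt_aleph_one, Cardinal.mk_univ, mk_Omega1]
  exact lt_irrefl _

lemma countable_Iio_Omega1 (α : Omega1) : (Set.Iio α).Countable := by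
  rw [Cardinal.countable_iff_lt_aleph_one]
  have h1 := Ordinal.typein_lt_self (o := Ordinal.omega 1) α
  have h3 : (Ordinal.typein ((· < ·) : Omega1 → Omega1 → Prop) α).card < Cardinal.aleph 1 :=
    Cardinal.lt_ord.mp (by rw [Cardinal.ord_aleph]; exact h1)
  have h2 := Ordinal.card_typein (r := ((· < ·) : Omega1 → Omega1 → Prop)) α
  rw [h2] at h3
  exact lt_of_eq_of_lt (by rfl) h3

lemma countable_Iic_Omega1 (α : Omega1) : (Set.Iic α).Countable := by
  have : Set.Iic α = insert α (Set.Iio α) := by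
    ext x; simp [le_iff_lt_or_eq, or_comm]
  rw [this]
  exact (countable_Iio_Omega1 α).insert α

lemma exists_not_mem_Omega1 {C : Set Omega1} (h : C.Countable) : ∃ β, β ∉ C := by
  by_contra hc
  push_neg at hc
  exact not_countable_univ_Omega1 (h.mono (fun x _ => hc x))

lemma exists_ge_of_not_countable_Omega1 {B : Set Omega1} (h : ¬ B.Countable) (α : Omega1) :
    ∃ β ∈ B, α ≤ β := by
  by_contra hcon
  push_neg at hcon
  exact h ((countable_Iio_Omega1 α).mono (fun x hx => hcon x hx))

lemma uncountable_of_unbounded_Omega1 {X : Set Omega1} (h : ∀ α : Omega1, ∃ γ ∈ X, α ≤ γ) :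
    ¬ X.Countable := by
  intro hX
  apply not_countable_univ_Omega1
  refine (hX.biUnion (t := fun γ _ => Set.Iic γ) (fun γ _ => countable_Iic_Omega1 γ)).mono ?_
  intro β _
  obtain ⟨γ, hγX, hγ⟩ := h β
  exact Set.mem_biUnion hγX hγ

/-! ### Auxiliary notions for the poset `ℙ` -/

/-- The set of `β` such that `insert β q` is still `𝒜`-free. -/
def Bset (𝒜 : Set (Finset Omega1)) (q : Finset Omega1) : Set Omega1 :=
  {β | ∀ s : Finset Omega1, ↑s ⊆ (↑(insert β q) : Set Omega1) → s ∈ 𝒜 → s.card ≤ 1}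

/-- Step 1: assuming ccc, there is a condition all of whose extensions have
uncountably many compatible singletons. -/
lemma exists_pstar (𝒜 : Set (Finset Omega1)) (hccc : IsCCC (PP 𝒜)) :
    ∃ p : PP 𝒜, ∀ q : PP 𝒜, p.1 ⊆ q.1 → ¬ (Bset 𝒜 q.1).Countable := by
  by_contra hcon
  push_neg at hcon
  -- hcon : ∀ p, ∃ q, p.1 ⊆ q.1 ∧ (Bset 𝒜 q.1).Countable
  set S : Set (Set (PP 𝒜)) := {M | (∀ q ∈ M, (Bset 𝒜 q.1).Countable) ∧
    ∀ p ∈ M, ∀ q ∈ M, p ≠ q → ¬ ∃ r : PP 𝒜, r ≤ p ∧ r ≤ q} with hSdef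
  obtain ⟨M, hMS⟩ := zorn_subset S (by
    intro c hcS hchain
    refine ⟨⋃₀ c, ⟨?_, ?_⟩, fun s hs => Set.subset_sUnion_of_mem hs⟩
    · rintro q ⟨t, htc, hqt⟩
      exact (hcS htc).1 q hqt
    · rintro p ⟨t1, ht1c, hpt1⟩ q ⟨t2, ht2c, hqt2⟩ hpq
      rcases hchain.total ht1c ht2c with h | h
      · exact (hcS ht2c).2 p (h hpt1) q hqt2 hpq
      · exact (hcS ht1c).2 p hpt1 q (h hqt2) hpq)
  have hM1 : ∀ q ∈ M, (Bset 𝒜 q.1).Countable := hMS.1.1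
  have hM2 := hMS.1.2
  have hMcnt : M.Countable := hccc M hM2
  have hU : (⋃ q ∈ M, Bset 𝒜 q.1).Countable :=
    hMcnt.biUnion (fun q hq => hM1 q hq)
  obtain ⟨β, hβ⟩ := exists_not_mem_Omega1 hU
  have hsingleton : ∀ s : Finset Omega1,
      ↑s ⊆ (↑({β} : Finset Omega1) : Set Omega1) → s ∈ 𝒜 → s.card ≤ 1 := by
    intro s hs _
    have := Finset.card_le_card (Finset.coe_subset.mp hs)
    simpa using this
  obtain ⟨q', hq'sub, hq'cnt⟩ := hcon ⟨{β}, hsingleton⟩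
  have hβq' : β ∈ q'.1 := Finset.singleton_subset_iff.mp hq'sub
  have hincomp : ∀ q ∈ M, ¬ ∃ r : PP 𝒜, r ≤ q' ∧ r ≤ q := by
    rintro q hqM ⟨r, hr1, hr2⟩
    apply hβ
    refine Set.mem_biUnion hqM ?_
    intro s hs hs𝒜
    refine r.2 s (hs.trans ?_) hs𝒜
    intro z hz
    rcases Finset.mem_insert.mp (Finset.mem_coe.mp hz) with rfl | hz'
    · exact Finset.mem_coe.mpr (hr1 hβq')
    · exact Finset.mem_coe.mpr (hr2 hz')
  have hq'M : q' ∉ M := by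
    intro hmem
    exact hincomp q' hmem ⟨q', le_refl q', le_refl q'⟩
  have hinsS : insert q' M ∈ S := by
    constructor
    · rintro q (rfl | hqM)
      · exact hq'cnt
      · exact hM1 q hqM
    · rintro p (rfl | hpM) q (rfl | hqM) hpq
      · exact absurd rfl hpq
      · exact hincomp q hqM
      · intro ⟨r, hr1, hr2⟩
        exact hincomp p hpM ⟨r, hr2, hr1⟩
      · exact hM2 p hpM q hqM hpq
  exact hq'M (hMS.2 hinsS (Set.subset_insert q' M) (Set.mem_insert q' M))

lemma aleph_one_lt_continuum_zero (h : Cardinal.aleph.{u} 1 < Cardinal.continuum.{u}) :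
    Cardinal.aleph.{0} 1 < Cardinal.continuum.{0} := by
  rw [← Cardinal.lift_lt.{0, u}, Cardinal.lift_aleph, Ordinal.lift_one, Cardinal.lift_continuum]
  exact h

/-- The main lemma: `ℙ` is not c.c.c. -/
lemma notCCC (hMA : MartinsAxiom)
    (hCH : Cardinal.aleph.{0} 1 < Cardinal.continuum.{0})
    (𝒜 : Set (Finset Omega1)) (h𝒜 : IsT0Family 𝒜) : ¬ IsCCC (PP 𝒜) := by
  obtain ⟨ℬ, hsub𝒜, _hsubℬ, _hcov, _hint, hT⟩ := h𝒜
  intro hccc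
  obtain ⟨pstar, hstar⟩ := exists_pstar 𝒜 hccc
  let P' := {q : PP 𝒜 // pstar.1 ⊆ q.1}
  let inst : PartialOrder P' :=
  { le := fun x y => y.1.1 ⊆ x.1.1
    le_refl := fun x => Finset.Subset.refl _
    le_trans := fun x y z h1 h2 => Finset.Subset.trans h2 h1
    le_antisymm := fun x y h1 h2 => Subtype.ext (Subtype.ext (Finset.Subset.antisymm h2 h1)) }
  have hcccP' : @IsCCC P' inst.toPreorder := by
    intro A hA
    have hval : Function.Injective (fun q : P' => q.1) := fun x y h => Subtype.ext h
    have h2 : ((fun q : P' => q.1) '' A).Countable := by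
      apply hccc
      rintro _ ⟨x, hxA, rfl⟩ _ ⟨y, hyA, rfl⟩ hne ⟨r, hr1, hr2⟩
      have hxy : x ≠ y := fun h => hne (by rw [h])
      exact hA x hxA y hyA hxy
        ⟨⟨r, Finset.Subset.trans x.2 hr1⟩, hr1, hr2⟩
    exact (h2.preimage hval).mono (Set.subset_preimage_image _ _)
  let Dfun : Omega1 → Set P' := fun α => {q : P' | ∃ γ ∈ q.1.1, α ≤ γ}
  have hmkD : Cardinal.mk (Set.range Dfun) < Cardinal.continuum :=
    lt_of_le_of_lt Cardinal.mk_range_le (by rw [mk_Omega1]; exact hCH)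
  have hdense : ∀ d ∈ Set.range Dfun, ∀ p : P', ∃ q ∈ d, inst.le q p := by
    rintro _ ⟨α, rfl⟩ p
    have hB := hstar p.1 p.2
    obtain ⟨β, hβB, hαβ⟩ := exists_ge_of_not_countable_Omega1 hB α
    exact ⟨⟨⟨insert β p.1.1, hβB⟩, p.2.trans (Finset.subset_insert _ _)⟩,
      ⟨β, Finset.mem_insert_self _ _, hαβ⟩, Finset.subset_insert _ _⟩
  obtain ⟨G, hGdir, _hGup, hGmeet⟩ :=
    hMA P' inst ⟨⟨pstar, Finset.Subset.refl _⟩⟩ hcccP' (Set.range Dfun) hmkD hdense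
  let X : Set Omega1 := {γ | ∃ q ∈ G, γ ∈ q.1.1.1}
  have hXunb : ∀ α : Omega1, ∃ γ ∈ X, α ≤ γ := by
    intro α
    obtain ⟨q, hqG, hqD⟩ := hGmeet (Dfun α) ⟨α, rfl⟩
    obtain ⟨γ, hγq, hαγ⟩ := hqD
    exact ⟨γ, ⟨q, hqG, hγq⟩, hαγ⟩
  have hX : ¬ X.Countable := uncountable_of_unbounded_Omega1 hXunb
  have hX1 : Cardinal.aleph 1 ≤ Cardinal.mk X := by
    rw [Cardinal.countable_iff_lt_aleph_one] at hX
    exact not_lt.mp hX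
  have hemb : Nonempty (Omega1 × Bool ↪ ↥X) := by
    rw [← Cardinal.le_def]
    have h2le : (2 : Cardinal) ≤ Cardinal.aleph 1 :=
      le_trans (le_of_lt (by exact_mod_cast Cardinal.nat_lt_aleph0 2))
        (Cardinal.aleph0_le_aleph 1)
    calc Cardinal.mk (Omega1 × Bool) = Cardinal.mk Omega1 * Cardinal.mk Bool := by
          rw [Cardinal.mk_prod]; simp
      _ = Cardinal.aleph 1 * 2 := by rw [mk_Omega1, Cardinal.mk_bool]
      _ = Cardinal.aleph 1 :=
          Cardinal.mul_eq_left (Cardinal.aleph0_le_aleph 1) h2le (by norm_num)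
      _ ≤ Cardinal.mk X := hX1
  obtain ⟨g⟩ := hemb
  let a : Omega1 → Omega1 := fun ξ => (g (ξ, false)).1
  let b : Omega1 → Omega1 := fun ξ => (g (ξ, true)).1
  have hginj : ∀ {x y : Omega1 × Bool}, ((g x : ↥X) : Omega1) = ((g y : ↥X) : Omega1) → x = y :=
    fun h => g.injective (Subtype.ext h)
  have hpd : PairwiseDisjointPairs a b := by
    constructor
    · intro ξ h
      have := hginj h
      simp at this
    · intro ξ η hne
      ext z
      simp only [Set.mem_inter_iff, Set.mem_insert_iff, Set.mem_singleton_iff,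
        Set.mem_empty_iff_false, iff_false, not_and, not_or]
      rintro (h1 | h1) <;> constructor <;> intro h2 <;>
        exact hne (congrArg Prod.fst (hginj (h1 ▸ h2 : _ = _)))
  obtain ⟨s, hscard, hsa, _hsb, hainj, _hbinj⟩ := hT a b hpd 2
  obtain ⟨ξ, η, hξη, rfl⟩ := Finset.card_eq_two.mp hscard
  obtain ⟨q1, hq1G, hq1⟩ := (g (ξ, false)).2
  obtain ⟨q2, hq2G, hq2⟩ := (g (η, false)).2
  obtain ⟨r, hrG, hr1, hr2⟩ := hGdir q1 hq1G q2 hq2G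
  have hsub : ↑(({ξ, η} : Finset Omega1).image a) ⊆ ((↑r.1.1 : Set Omega1)) := by
    intro z hz
    simp only [Finset.coe_image, Finset.coe_insert, Finset.coe_singleton,
      Set.image_insert_eq, Set.image_singleton, Set.mem_insert_iff,
      Set.mem_singleton_iff] at hz
    rcases hz with rfl | rfl
    · exact Finset.mem_coe.mpr (hr1 hq1)
    · exact Finset.mem_coe.mpr (hr2 hq2)
  have hcard := r.1.2 (({ξ, η} : Finset Omega1).image a) hsub hsa
  rw [Finset.card_image_of_injOn hainj, hscard] at hcard
  omega

/-- under MA + ¬CH, for any T₀-family `𝒜` the poset `ℙ` is not c.c.c.;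
consequently there is an uncountable family of finite `𝒜`-free sets such that the
union of any two distinct members contains a pair from `𝒜`. -/
theorem stmt9 (hMA : MartinsAxiom)
    (hCH : Cardinal.aleph 1 < Cardinal.continuum)
    (𝒜 : Set (Finset Omega1)) (h𝒜 : IsT0Family 𝒜) :
    ¬ IsCCC (PP 𝒜) ∧
    ∃ F : Set (Finset Omega1), ¬ F.Countable ∧
      (∀ p ∈ F, ∀ s : Finset Omega1, ↑s ⊆ (↑p : Set Omega1) → s ∈ 𝒜 → s.card ≤ 1) ∧
      ∀ p ∈ F, ∀ q ∈ F, p ≠ q →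
        ∃ ξ ∈ p ∪ q, ∃ η ∈ p ∪ q, ξ ≠ η ∧ ({ξ, η} : Finset Omega1) ∈ 𝒜 := by
  have hnc := notCCC hMA (aleph_one_lt_continuum_zero hCH) 𝒜 h𝒜
  refine ⟨hnc, ?_⟩
  rw [IsCCC] at hnc
  push_neg at hnc
  obtain ⟨A, hAanti, hAunc⟩ := hnc
  obtain ⟨ℬ, hsub𝒜, _⟩ := h𝒜
  refine ⟨(fun p : PP 𝒜 => p.1) '' A, ?_, ?_, ?_⟩
  · intro hF
    apply hAunc
    have hval : Function.Injective (fun p : PP 𝒜 => p.1) := fun x y h => Subtype.ext h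
    exact (hF.preimage hval).mono (Set.subset_preimage_image _ _)
  · rintro _ ⟨P, _, rfl⟩
    exact P.2
  · rintro _ ⟨P, hPA, rfl⟩ _ ⟨Q, hQA, rfl⟩ hne
    have hPQ : P ≠ Q := fun h => hne (by rw [h])
    have hnofree : ∃ s : Finset Omega1, (↑s ⊆ ((P.1 ∪ Q.1 : Finset Omega1) : Set Omega1) ∧ s ∈ 𝒜) ∧ 2 ≤ s.card := by
      by_contra hcon
      push_neg at hcon
      have hfree : ∀ s : Finset Omega1, ↑s ⊆ ((P.1 ∪ Q.1 : Finset Omega1) : Set Omega1) → s ∈ 𝒜 → s.card ≤ 1 := by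
        intro s h1 h2
        have := hcon s ⟨h1, h2⟩
        omega
      exact hAanti P hPA Q hQA hPQ ⟨P.1 ∪ Q.1, hfree⟩
        (show P.1 ⊆ P.1 ∪ Q.1 from Finset.subset_union_left)
        (show Q.1 ⊆ P.1 ∪ Q.1 from Finset.subset_union_right)
    obtain ⟨s, ⟨hssub, hs𝒜⟩, hscard⟩ := hnofree
    obtain ⟨ξ, hξs, η, hηs, hξη⟩ := Finset.one_lt_card.mp (by omega : 1 < s.card)
    refine ⟨ξ, Finset.mem_coe.mp (hssub (Finset.mem_coe.mpr hξs)),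
      η, Finset.mem_coe.mp (hssub (Finset.mem_coe.mpr hηs)), hξη, ?_⟩
    exact hsub𝒜 s hs𝒜 {ξ, η} (Finset.insert_subset hξs (Finset.singleton_subset_iff.mpr hηs))

end
end

section
/- Let 𝒜 be a strong T₀-family. For every δ > 0 there is ε > 0 such that for every uncountable (1−ε)-separated subset {x_α : α < ω₁} of the unit sphere of X_𝒜, there are α < β with ‖x_α − x_β‖_𝒜 > √2 − δ and there are ξ < η with ‖x_ξ − x_η‖_𝒜 < 1 + δ. -/
noncomputable section

/-- `𝒜` is a strong T₀-family. -/
def IsStrongT0Family (𝒜 : Set (Finset Omega1)) : Prop :=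
  (∀ A ∈ 𝒜, ∀ B : Finset Omega1, B ⊆ A → B ∈ 𝒜) ∧
  (∀ α : Omega1, ({α} : Finset Omega1) ∈ 𝒜) ∧
  (∀ F : Omega1 → Finset Omega1, Function.Injective F →
    (∀ ξ η : Omega1, ξ ≠ η → Disjoint (F ξ) (F η)) →
    ((∃ ξ η : Omega1, ξ ≠ η ∧
        ∀ α ∈ F ξ, ∀ β ∈ F η, ({α, β} : Finset Omega1) ∉ 𝒜) ∧
     (∃ ξ η : Omega1, ξ ≠ η ∧
        ∀ α ∈ F ξ, ∀ β ∈ F η, ({α, β} : Finset Omega1) ∈ 𝒜))) ∧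
  (∀ C : Finset Omega1,
    (∀ α ∈ C, ∀ β ∈ C, α ≠ β → ({α, β} : Finset Omega1) ∈ 𝒜) → C ∈ 𝒜)

/-- `x` belongs to the concrete representation of the space `X_𝒜`, i.e. it is a
`‖·‖_𝒜`-limit of finitely supported vectors. -/
def MemXA (𝒜 : Set (Finset Omega1)) (x : Omega1 → ℝ) : Prop :=
  ∀ ε : ℝ, 0 < ε → ∃ y : Omega1 → ℝ,
    (Function.support y).Finite ∧ normA 𝒜 (x - y) ≤ ε

open Cardinal in
lemma omega1_mk : #Omega1 = Cardinal.aleph 1 := by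
  rw [Cardinal.mk_toType, Ordinal.card_omega]

lemma omega1_not_countable : ¬(Set.univ : Set Omega1).Countable := by
  rw [Cardinal.countable_iff_lt_aleph_one, Cardinal.mk_univ, omega1_mk]
  exact lt_irrefl _

lemma exists_inj_into {S : Set Omega1} (hS : ¬S.Countable) :
    ∃ f : Omega1 → Omega1, Function.Injective f ∧ ∀ ι, f ι ∈ S := by
  rw [Cardinal.countable_iff_lt_aleph_one, not_lt] at hS
  rw [← omega1_mk] at hS
  obtain ⟨e⟩ := Cardinal.le_def _ _ |>.mp hS
  exact ⟨fun ι => (e ι : Omega1), fun a b h => e.injective (Subtype.ext h),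
    fun ι => (e ι).2⟩

lemma uncountable_fiber {B : Type*} [Countable B] {S : Set Omega1} (hS : ¬S.Countable)
    (f : Omega1 → B) : ∃ b, ¬{ξ | ξ ∈ S ∧ f ξ = b}.Countable := by
  by_contra h
  push_neg at h
  refine hS <| (Set.countable_iUnion h).mono ?_
  intro ξ hξ
  exact Set.mem_iUnion.2 ⟨f ξ, hξ, rfl⟩

lemma exists_two_ne {S : Set Omega1} (hS : ¬S.Countable) :
    ∃ ξ ∈ S, ∃ η ∈ S, ξ ≠ η := by
  by_contra h
  push_neg at h
  exact hS (Set.Subsingleton.countable fun a ha b hb => by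
    by_contra hne; exact hne (h a ha b hb))

lemma exists_uncountable_pairwise_disjoint (G : Omega1 → Finset Omega1) (S : Set Omega1)
    (hS : ¬S.Countable) (h : ∀ a : Omega1, {ξ | ξ ∈ S ∧ a ∈ G ξ}.Countable) :
    ∃ T ⊆ S, ¬T.Countable ∧ ∀ ξ ∈ T, ∀ η ∈ T, ξ ≠ η → Disjoint (G ξ) (G η) := by
  set 𝒮 : Set (Set Omega1) :=
    {T | T ⊆ S ∧ ∀ ξ ∈ T, ∀ η ∈ T, ξ ≠ η → Disjoint (G ξ) (G η)} with h𝒮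
  obtain ⟨m, hm⟩ := zorn_subset 𝒮 (fun c hc hchain => by
    refine ⟨⋃₀ c, ⟨?_, ?_⟩, fun s hs => Set.subset_sUnion_of_mem hs⟩
    · exact Set.sUnion_subset fun t ht => (hc ht).1
    · rintro ξ hξ η hη hne
      obtain ⟨t₁, ht₁, hξ₁⟩ := hξ
      obtain ⟨t₂, ht₂, hη₂⟩ := hη
      rcases hchain.total ht₁ ht₂ with hle | hle
      · exact (hc ht₂).2 ξ (hle hξ₁) η hη₂ hne
      · exact (hc ht₁).2 ξ hξ₁ η (hle hη₂) hne)
  by_cases hcnt : m.Countable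
  · exfalso
    have hB : (⋃ ξ ∈ m, (G ξ : Set Omega1)).Countable :=
      hcnt.biUnion fun ξ _ => (G ξ).countable_toSet
    have hBad : (⋃ a ∈ (⋃ ξ ∈ m, (G ξ : Set Omega1)), {ξ | ξ ∈ S ∧ a ∈ G ξ}).Countable :=
      hB.biUnion fun a _ => h a
    have hsub : ¬(S ⊆ m ∪ (⋃ a ∈ (⋃ ξ ∈ m, (G ξ : Set Omega1)), {ξ | ξ ∈ S ∧ a ∈ G ξ})) :=
      fun hsub => hS <| Set.Countable.mono hsub (hcnt.union hBad)
    rw [Set.not_subset] at hsub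
    obtain ⟨η, hηS, hη⟩ := hsub
    simp only [Set.mem_union, not_or] at hη
    have hmem : insert η m ∈ 𝒮 := by
      refine ⟨Set.insert_subset hηS hm.prop.1, ?_⟩
      have key : ∀ ξ ∈ m, Disjoint (G ξ) (G η) := by
        intro ξ hξ
        rw [Finset.disjoint_left]
        intro a haξ haη
        exact hη.2 <| Set.mem_biUnion (Set.mem_biUnion hξ haξ) ⟨hηS, haη⟩
      rintro ξ (rfl | hξ) ζ (rfl | hζ) hne
      · exact absurd rfl hne
      · exact (key ζ hζ).symm
      · exact key ξ hξ
      · exact hm.prop.2 ξ hξ ζ hζ hne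
    have : insert η m ⊆ m := hm.2 hmem (Set.subset_insert η m)
    exact hη.1 (this (Set.mem_insert η m))
  · exact ⟨m, hm.prop.1, hcnt, hm.prop.2⟩

lemma weakDelta (n : ℕ) (G : Omega1 → Finset Omega1) (S : Set Omega1)
    (hS : ¬S.Countable) (hn : ∀ ξ ∈ S, (G ξ).card ≤ n) :
    ∃ (R : Finset Omega1) (T : Set Omega1), T ⊆ S ∧ ¬T.Countable ∧
      ∀ ξ ∈ T, ∀ η ∈ T, ξ ≠ η → Disjoint (G ξ \ R) (G η \ R) := by
  induction n generalizing G S with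
  | zero =>
      refine ⟨∅, S, le_refl _, hS, fun ξ hξ η hη hne => ?_⟩
      have : G ξ = ∅ := Finset.card_eq_zero.mp (Nat.le_zero.mp (hn ξ hξ))
      simp [this]
  | succ n ih =>
      by_cases hcase : ∀ a : Omega1, {ξ | ξ ∈ S ∧ a ∈ G ξ}.Countable
      · obtain ⟨T, hTS, hT, hdisj⟩ := exists_uncountable_pairwise_disjoint G S hS hcase
        exact ⟨∅, T, hTS, hT, fun ξ hξ η hη hne => by
          simpa using hdisj ξ hξ η hη hne⟩
      · push_neg at hcase
        obtain ⟨a, ha⟩ := hcase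
        obtain ⟨R', T, hTsub, hT, hdisj⟩ := ih (fun ξ => G ξ \ {a})
          {ξ | ξ ∈ S ∧ a ∈ G ξ} ha (fun ξ hξ => by
            have h1 : (G ξ \ {a}).card = (G ξ).card - 1 := by
              rw [Finset.sdiff_singleton_eq_erase, Finset.card_erase_of_mem hξ.2]
            show (G ξ \ {a}).card ≤ n
            have h2 := hn ξ hξ.1
            omega)
        refine ⟨insert a R', T, fun ξ hξ => (hTsub hξ).1, hT, fun ξ hξ η hη hne => ?_⟩
        have e : ∀ ζ : Omega1, G ζ \ insert a R' = (G ζ \ {a}) \ R' := by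
          intro ζ
          ext b
          simp only [Finset.mem_sdiff, Finset.mem_insert, Finset.mem_singleton]
          tauto
        rw [e, e]
        exact hdisj ξ hξ η hη hne

section NormA

variable {𝒜 : Set (Finset Omega1)} {x y u v : Omega1 → ℝ} {C : ℝ}

/-- Cauchy–Schwarz-type triangle inequality for finite ℓ² sums. -/
lemma sum_sq_add_le (A : Finset Omega1) (u v : Omega1 → ℝ) :
    ∑ a ∈ A, (u a + v a) ^ 2 ≤
      (Real.sqrt (∑ a ∈ A, u a ^ 2) + Real.sqrt (∑ a ∈ A, v a ^ 2)) ^ 2 := by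
  have hcs : ∑ a ∈ A, u a * v a ≤
      Real.sqrt (∑ a ∈ A, u a ^ 2) * Real.sqrt (∑ a ∈ A, v a ^ 2) := by
    have h2 := Finset.sum_mul_sq_le_sq_mul_sq A u v
    calc ∑ a ∈ A, u a * v a ≤ |∑ a ∈ A, u a * v a| := le_abs_self _
      _ = Real.sqrt ((∑ a ∈ A, u a * v a) ^ 2) := (Real.sqrt_sq_eq_abs _).symm
      _ ≤ Real.sqrt ((∑ a ∈ A, u a ^ 2) * ∑ a ∈ A, v a ^ 2) := Real.sqrt_le_sqrt h2
      _ = _ := Real.sqrt_mul (Finset.sum_nonneg fun a _ => sq_nonneg (u a)) _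
  have hu : Real.sqrt (∑ a ∈ A, u a ^ 2) ^ 2 = ∑ a ∈ A, u a ^ 2 :=
    Real.sq_sqrt (Finset.sum_nonneg fun a _ => sq_nonneg (u a))
  have hv : Real.sqrt (∑ a ∈ A, v a ^ 2) ^ 2 = ∑ a ∈ A, v a ^ 2 :=
    Real.sq_sqrt (Finset.sum_nonneg fun a _ => sq_nonneg (v a))
  calc ∑ a ∈ A, (u a + v a) ^ 2
      = ∑ a ∈ A, (u a ^ 2 + 2 * (u a * v a) + v a ^ 2) := by
        apply Finset.sum_congr rfl; intros; ring
    _ = ∑ a ∈ A, u a ^ 2 + 2 * ∑ a ∈ A, u a * v a + ∑ a ∈ A, v a ^ 2 := by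
        rw [Finset.sum_add_distrib, Finset.sum_add_distrib, ← Finset.mul_sum]
    _ ≤ _ := by rw [add_sq, hu, hv]; nlinarith [hcs]

lemma sqrt_sum_sq_add_le (A : Finset Omega1) (u v : Omega1 → ℝ) :
    Real.sqrt (∑ a ∈ A, (u a + v a) ^ 2) ≤
      Real.sqrt (∑ a ∈ A, u a ^ 2) + Real.sqrt (∑ a ∈ A, v a ^ 2) := by
  have h := Real.sqrt_le_sqrt (sum_sq_add_le A u v)
  rwa [Real.sqrt_sq (by positivity)] at h

lemma normA_le_of (hC : 0 ≤ C) (h : ∀ A ∈ 𝒜, ∑ a ∈ A, x a ^ 2 ≤ C ^ 2) :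
    normA 𝒜 x ≤ C := by
  refine Real.sSup_le ?_ hC
  rintro r ⟨A, hA, rfl⟩
  calc Real.sqrt (∑ a ∈ A, x a ^ 2) ≤ Real.sqrt (C ^ 2) := Real.sqrt_le_sqrt (h A hA)
    _ = C := Real.sqrt_sq hC

lemma le_normA_of {A : Finset Omega1} (hA : A ∈ 𝒜)
    (h : ∀ B ∈ 𝒜, ∑ a ∈ B, x a ^ 2 ≤ C ^ 2) :
    Real.sqrt (∑ a ∈ A, x a ^ 2) ≤ normA 𝒜 x := by
  refine le_csSup ⟨|C|, ?_⟩ ⟨A, hA, rfl⟩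
  rintro r ⟨B, hB, rfl⟩
  calc Real.sqrt (∑ a ∈ B, x a ^ 2) ≤ Real.sqrt (C ^ 2) := Real.sqrt_le_sqrt (h B hB)
    _ = |C| := by rw [Real.sqrt_sq_eq_abs]

lemma sum_sq_le_one_of_normA_eq_one (h1 : normA 𝒜 x = 1) {A : Finset Omega1}
    (hA : A ∈ 𝒜) : ∑ a ∈ A, x a ^ 2 ≤ 1 := by
  by_contra hlt
  push_neg at hlt
  by_cases hbdd : BddAbove {r : ℝ | ∃ A ∈ 𝒜, r = Real.sqrt (∑ α ∈ A, (x α) ^ 2)}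
  · have hle : Real.sqrt (∑ a ∈ A, x a ^ 2) ≤ normA 𝒜 x := le_csSup hbdd ⟨A, hA, rfl⟩
    rw [h1] at hle
    have : ∑ a ∈ A, x a ^ 2 ≤ 1 := by
      have := Real.sqrt_le_sqrt (Real.sq_sqrt (Finset.sum_nonneg
        fun a _ => sq_nonneg (x a)) ▸ le_refl (∑ a ∈ A, x a ^ 2))
      nlinarith [Real.sq_sqrt (Finset.sum_nonneg (fun a (_ : a ∈ A) => sq_nonneg (x a))),
        Real.sqrt_nonneg (∑ a ∈ A, x a ^ 2), hle]
    linarith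
  · have : normA 𝒜 x = 0 := Real.sSup_of_not_bddAbove hbdd
    rw [h1] at this
    norm_num at this

end NormA

lemma sum_sq_le_sq_of_parts {A : Finset Omega1} {w u v : Omega1 → ℝ} {c d : ℝ}
    (hc : 0 ≤ c) (hd : 0 ≤ d)
    (hw : ∀ a ∈ A, w a = u a + v a)
    (hu : ∑ a ∈ A, u a ^ 2 ≤ c ^ 2) (hv : ∑ a ∈ A, v a ^ 2 ≤ d ^ 2) :
    ∑ a ∈ A, w a ^ 2 ≤ (c + d) ^ 2 := by
  have h1 : ∑ a ∈ A, w a ^ 2 = ∑ a ∈ A, (u a + v a) ^ 2 :=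
    Finset.sum_congr rfl fun a ha => by rw [hw a ha]
  have h2 := sum_sq_add_le A u v
  have hsu : Real.sqrt (∑ a ∈ A, u a ^ 2) ≤ c := by
    have := Real.sqrt_le_sqrt hu
    rwa [Real.sqrt_sq hc] at this
  have hsv : Real.sqrt (∑ a ∈ A, v a ^ 2) ≤ d := by
    have := Real.sqrt_le_sqrt hv
    rwa [Real.sqrt_sq hd] at this
  rw [h1]
  refine h2.trans ?_
  nlinarith [Real.sqrt_nonneg (∑ a ∈ A, u a ^ 2), Real.sqrt_nonneg (∑ a ∈ A, v a ^ 2)]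

lemma le_sq_of_sqrt_le {X c : ℝ} (hX : 0 ≤ X) (h : Real.sqrt X ≤ c) : X ≤ c ^ 2 := by
  nlinarith [Real.sq_sqrt hX, Real.sqrt_nonneg X]

lemma normA_sub_comm (𝒜 : Set (Finset Omega1)) (u v : Omega1 → ℝ) :
    normA 𝒜 (u - v) = normA 𝒜 (v - u) := by
  unfold normA
  congr 1
  ext r
  constructor <;> rintro ⟨A, hA, rfl⟩ <;>
    exact ⟨A, hA, by
      congr 1
      refine Finset.sum_congr rfl fun a _ => ?_
      simp only [Pi.sub_apply]
      ring⟩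

lemma applyT0 {𝒜 : Set (Finset Omega1)} (h𝒜 : IsStrongT0Family 𝒜)
    (D : Omega1 → Finset Omega1) (S : Set Omega1)
    (hS : ¬S.Countable) (hne : ∀ ξ ∈ S, (D ξ).Nonempty)
    (hdisj : ∀ ξ ∈ S, ∀ η ∈ S, ξ ≠ η → Disjoint (D ξ) (D η)) :
    (∃ ξ ∈ S, ∃ η ∈ S, ξ ≠ η ∧ ∀ a ∈ D ξ, ∀ b ∈ D η, ({a, b} : Finset Omega1) ∉ 𝒜) ∧
    (∃ ξ ∈ S, ∃ η ∈ S, ξ ≠ η ∧ ∀ a ∈ D ξ, ∀ b ∈ D η, ({a, b} : Finset Omega1) ∈ 𝒜) := by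
  obtain ⟨f, hfinj, hfS⟩ := exists_inj_into hS
  have hFdisj : ∀ ι κ : Omega1, ι ≠ κ → Disjoint (D (f ι)) (D (f κ)) :=
    fun ι κ h => hdisj _ (hfS ι) _ (hfS κ) fun e => h (hfinj e)
  have hFinj : Function.Injective (fun ι => D (f ι)) := by
    intro ι κ h
    by_contra hne'
    have hd := hFdisj ι κ hne'
    simp only at h
    rw [h, disjoint_self] at hd
    obtain ⟨a, ha⟩ := hne (f κ) (hfS κ)
    rw [hd] at ha
    exact Finset.notMem_empty a ha
  obtain ⟨⟨ι₁, κ₁, hne₁, h₁⟩, ⟨ι₂, κ₂, hne₂, h₂⟩⟩ := h𝒜.2.2.1 _ hFinj hFdisj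
  exact ⟨⟨f ι₁, hfS _, f κ₁, hfS _, fun e => hne₁ (hfinj e), h₁⟩,
    ⟨f ι₂, hfS _, f κ₂, hfS _, fun e => hne₂ (hfinj e), h₂⟩⟩

lemma not_countable_diff {S T : Set Omega1} (hS : ¬S.Countable) (hT : T.Countable) :
    ¬(S \ T).Countable := fun h =>
  hS <| (h.union hT).mono fun a ha => by
    by_cases hmem : a ∈ T
    · exact Or.inr hmem
    · exact Or.inl ⟨ha, hmem⟩

example (R : Finset Omega1) : Countable (↥R → ℤ) := inferInstance

lemma card_mul_div_sq_le {k e : ℝ} (hk : 0 ≤ k) (he : 0 ≤ e) :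
    k * (e / (k + 1)) ^ 2 ≤ e ^ 2 := by
  rw [div_pow, mul_div_assoc', div_le_iff₀ (by positivity)]
  nlinarith [sq_nonneg e, sq_nonneg k, mul_nonneg (mul_nonneg he he) hk]

lemma sqrt_sq_add_sq_le {e s : ℝ} (he : 0 ≤ e) (hs : 0 ≤ s) :
    Real.sqrt (e ^ 2 + s ^ 2) ≤ e + s := by
  have h := Real.sqrt_le_sqrt (show e ^ 2 + s ^ 2 ≤ (e + s) ^ 2 by nlinarith [mul_nonneg he hs])
  rwa [Real.sqrt_sq (by positivity)] at h

lemma sqrt_two_le_two : Real.sqrt 2 ≤ 2 := by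
  nlinarith [Real.sq_sqrt (by norm_num : (0:ℝ) ≤ 2), Real.sqrt_nonneg 2]

lemma sqrt_two_mul_aux {e : ℝ} (he : 0 ≤ e) :
    Real.sqrt 2 - 10 * e ≤ Real.sqrt 2 * (1 - 5 * e) := by
  nlinarith [sqrt_two_le_two, Real.sqrt_nonneg 2]

set_option maxHeartbeats 2000000 in
/-- for every `δ > 0` there is `ε > 0` such that every uncountable
`(1-ε)`-separated subset of the unit sphere of `X_𝒜` contains a pair at distance
more than `√2 - δ` and a pair at distance less than `1 + δ`. -/
theorem stmt11 (𝒜 : Set (Finset Omega1)) (h𝒜 : IsStrongT0Family 𝒜)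
    (δ : ℝ) (hδ : 0 < δ) :
    ∃ ε : ℝ, 0 < ε ∧
      ∀ x : Omega1 → Omega1 → ℝ, Function.Injective x →
        (∀ α, MemXA 𝒜 (x α)) → (∀ α, normA 𝒜 (x α) = 1) →
        (∀ α β : Omega1, α ≠ β → 1 - ε ≤ normA 𝒜 (x α - x β)) →
        (∃ α β : Omega1, α < β ∧ Real.sqrt 2 - δ < normA 𝒜 (x α - x β)) ∧
        (∃ ξ η : Omega1, ξ < η ∧ normA 𝒜 (x ξ - x η) < 1 + δ) := by
  refine ⟨min δ 1 / 100, by positivity, fun x _hxinj hmem hnorm hsep => ?_⟩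
  set ε : ℝ := min δ 1 / 100 with hεdef
  have hε : 0 < ε := by positivity
  have hε1 : ε ≤ 1 / 100 := by
    have := min_le_right δ 1
    rw [hεdef]; linarith
  have hεδ : 100 * ε ≤ δ := by
    have := min_le_left δ 1
    rw [hεdef]; linarith
  -- basic bounds on x
  have hx1 : ∀ α, ∀ A ∈ 𝒜, ∑ a ∈ A, (x α a) ^ 2 ≤ 1 := by
    intro α A hA
    have := sum_sq_le_one_of_normA_eq_one (hnorm α) hA
    exact this
  -- choose finitely supported approximations
  choose y hyfin hye using fun α => hmem α ε hε
  set N : Omega1 → Finset Omega1 := fun α => (hyfin α).toFinset with hNdef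
  have hyN : ∀ α a, a ∉ N α → y α a = 0 := by
    intro α a ha
    by_contra h
    exact ha ((hyfin α).mem_toFinset.mpr h)
  -- error bounds
  have herr : ∀ α, ∀ A ∈ 𝒜, ∑ a ∈ A, (x α a - y α a) ^ 2 ≤ ε ^ 2 := by
    intro α A hA
    set L : ℝ := Real.sqrt (∑ a ∈ N α, (y α a) ^ 2) with hLdef
    have hL : 0 ≤ L := Real.sqrt_nonneg _
    have hyb : ∀ B : Finset Omega1, ∑ a ∈ B, (y α a) ^ 2 ≤ L ^ 2 := by
      intro B
      rw [hLdef, Real.sq_sqrt (Finset.sum_nonneg fun a _ => sq_nonneg _)]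
      rw [show ∑ a ∈ B, (y α a) ^ 2 = ∑ a ∈ B ∩ N α, (y α a) ^ 2 from
        (Finset.sum_subset Finset.inter_subset_left fun a _ ha2 => by
          rw [hyN α a (fun h => ha2 (Finset.mem_inter.mpr ⟨‹a ∈ B›, h⟩))]; ring).symm]
      exact Finset.sum_le_sum_of_subset_of_nonneg Finset.inter_subset_right
        fun a _ _ => sq_nonneg _
    have hbddC : ∀ B ∈ 𝒜, ∑ a ∈ B, ((x α - y α) a) ^ 2 ≤ (1 + L) ^ 2 := by
      intro B hB
      refine sum_sq_le_sq_of_parts (u := x α) (v := fun a => - y α a)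
        zero_le_one hL (fun a _ => by simp [Pi.sub_apply]; ring) ?_ ?_
      · rw [one_pow]; exact hx1 α B hB
      · simpa using hyb B
    have hsq : Real.sqrt (∑ a ∈ A, ((x α - y α) a) ^ 2) ≤ ε :=
      (le_normA_of hA hbddC).trans (hye α)
    have := le_sq_of_sqrt_le (Finset.sum_nonneg fun a _ => sq_nonneg _) hsq
    calc ∑ a ∈ A, (x α a - y α a) ^ 2 = ∑ a ∈ A, ((x α - y α) a) ^ 2 := by
          refine Finset.sum_congr rfl fun a _ => by simp [Pi.sub_apply]
      _ ≤ ε ^ 2 := this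
  -- y bounds
  have hy_bdd : ∀ α, ∀ A ∈ 𝒜, ∑ a ∈ A, (y α a) ^ 2 ≤ (1 + ε) ^ 2 := by
    intro α A hA
    refine sum_sq_le_sq_of_parts (u := x α) (v := fun a => y α a - x α a)
      zero_le_one hε.le (fun a _ => by ring) ?_ ?_
    · rw [one_pow]; exact hx1 α A hA
    · calc ∑ a ∈ A, (y α a - x α a) ^ 2 = ∑ a ∈ A, (x α a - y α a) ^ 2 :=
            Finset.sum_congr rfl fun a _ => by ring
        _ ≤ ε ^ 2 := herr α A hA
  -- pigeonhole on support size
  obtain ⟨n, hS₁⟩ := uncountable_fiber (B := ℕ) omega1_not_countable fun ξ => (N ξ).card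
  set S₁ : Set Omega1 := {ξ | ξ ∈ Set.univ ∧ (N ξ).card = n} with hS₁def
  obtain ⟨R, S₂, hS₂sub, hS₂, hS₂disj⟩ := weakDelta n N S₁ hS₁ fun ξ hξ => le_of_eq hξ.2
  -- stabilize values on the root R
  set θ : ℝ := ε / (R.card + 1) with hθdef
  have hθ : 0 < θ := by positivity
  obtain ⟨b, hS₃⟩ := uncountable_fiber hS₂ fun ξ (ρ : ↥R) => ⌊y ξ ↑ρ / θ⌋
  set S₃ : Set Omega1 := {ξ | ξ ∈ S₂ ∧ (fun ρ : ↥R => ⌊y ξ ↑ρ / θ⌋) = b} with hS₃def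
  have hclose : ∀ ξ ∈ S₃, ∀ η ∈ S₃, ∀ ρ ∈ R, |y ξ ρ - y η ρ| < θ := by
    intro ξ hξ η hη ρ hρ
    have h1 : ⌊y ξ ρ / θ⌋ = ⌊y η ρ / θ⌋ := by
      have := hξ.2.trans hη.2.symm
      exact congrFun this ⟨ρ, hρ⟩
    have h2 := Int.abs_sub_lt_one_of_floor_eq_floor h1
    rw [div_sub_div_same, abs_div, abs_of_pos hθ, div_lt_one hθ] at h2
    exact h2
  have hrootsum : ∀ ξ ∈ S₃, ∀ η ∈ S₃, ∀ A : Finset Omega1, A ⊆ R →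
      ∑ a ∈ A, (y ξ a - y η a) ^ 2 ≤ ε ^ 2 := by
    intro ξ hξ η hη A hAR
    have hterm : ∀ a ∈ A, (y ξ a - y η a) ^ 2 ≤ θ ^ 2 := by
      intro a ha
      have := (abs_le.mp (hclose ξ hξ η hη a (hAR ha)).le)
      exact sq_le_sq' this.1 this.2
    have h1 : ∑ a ∈ A, (y ξ a - y η a) ^ 2 ≤ ∑ _a ∈ A, θ ^ 2 := Finset.sum_le_sum hterm
    rw [Finset.sum_const, nsmul_eq_mul] at h1
    have h2 : (A.card : ℝ) * θ ^ 2 ≤ (R.card : ℝ) * θ ^ 2 :=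
      mul_le_mul_of_nonneg_right (Nat.cast_le.mpr (Finset.card_le_card hAR)) (sq_nonneg θ)
    have h3 : (R.card : ℝ) * θ ^ 2 ≤ ε ^ 2 := by
      rw [hθdef]
      exact card_mul_div_sq_le (Nat.cast_nonneg _) hε.le
    linarith
  -- off-root supports
  set D : Omega1 → Finset Omega1 := fun ξ => N ξ \ R with hDdef
  have hS₃S₂ : S₃ ⊆ S₂ := fun ξ hξ => hξ.1
  have hDdisj : ∀ ξ ∈ S₃, ∀ η ∈ S₃, ξ ≠ η → Disjoint (D ξ) (D η) :=
    fun ξ hξ η hη hne => hS₂disj ξ (hS₃S₂ hξ) η (hS₃S₂ hη) hne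
  have hzero : ∀ ξ a, a ∉ R → a ∉ D ξ → y ξ a = 0 := by
    intro ξ a hR hD
    by_contra h
    have haN : a ∈ N ξ := (hyfin ξ).mem_toFinset.mpr h
    exact hD (Finset.mem_sdiff.mpr ⟨haN, hR⟩)
  -- core estimate for pairs whose supports are not connected through A
  have core : ∀ ξ ∈ S₃, ∀ η ∈ S₃, ξ ≠ η → ∀ s : ℝ,
      (∀ A ∈ 𝒜, A ⊆ D ξ → ∑ a ∈ A, (y ξ a) ^ 2 ≤ s ^ 2) →
      ∀ A ∈ 𝒜, A ∩ D η = ∅ → ∑ a ∈ A, (y ξ a - y η a) ^ 2 ≤ ε ^ 2 + s ^ 2 := by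
    intro ξ hξ η hη hne s hsmall A hA hAη
    have hsub : (A ∩ R) ∪ (A ∩ D ξ) ⊆ A := by
      intro a ha
      rcases Finset.mem_union.mp ha with h | h
      · exact (Finset.mem_inter.mp h).1
      · exact (Finset.mem_inter.mp h).1
    have hzero' : ∀ a ∈ A, a ∉ (A ∩ R) ∪ (A ∩ D ξ) → (y ξ a - y η a) ^ 2 = 0 := by
      intro a haA hnot
      rw [Finset.mem_union] at hnot
      push_neg at hnot
      have haR : a ∉ R := fun h => hnot.1 (Finset.mem_inter.mpr ⟨haA, h⟩)
      have haDξ : a ∉ D ξ := fun h => hnot.2 (Finset.mem_inter.mpr ⟨haA, h⟩)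
      have haDη : a ∉ D η := fun h => by
        have : a ∈ A ∩ D η := Finset.mem_inter.mpr ⟨haA, h⟩
        rw [hAη] at this
        exact Finset.notMem_empty a this
      rw [hzero ξ a haR haDξ, hzero η a haR haDη]
      ring
    have hdisjRD : Disjoint (A ∩ R) (A ∩ D ξ) := by
      rw [Finset.disjoint_left]
      intro a h1 h2
      have haR := (Finset.mem_inter.mp h1).2
      have haD := (Finset.mem_inter.mp h2).2
      exact (Finset.mem_sdiff.mp haD).2 haR
    have hsum : ∑ a ∈ A, (y ξ a - y η a) ^ 2
        = ∑ a ∈ (A ∩ R), (y ξ a - y η a) ^ 2 + ∑ a ∈ (A ∩ D ξ), (y ξ a - y η a) ^ 2 := by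
      rw [← Finset.sum_union hdisjRD]
      exact (Finset.sum_subset hsub hzero').symm
    have h1 : ∑ a ∈ (A ∩ R), (y ξ a - y η a) ^ 2 ≤ ε ^ 2 :=
      hrootsum ξ hξ η hη _ Finset.inter_subset_right
    have h2 : ∑ a ∈ (A ∩ D ξ), (y ξ a - y η a) ^ 2 = ∑ a ∈ (A ∩ D ξ), (y ξ a) ^ 2 := by
      refine Finset.sum_congr rfl fun a ha => ?_
      have haD : a ∈ D ξ := (Finset.mem_inter.mp ha).2
      have haR : a ∉ R := (Finset.mem_sdiff.mp haD).2
      have haDη : a ∉ D η := Finset.disjoint_left.mp (hDdisj ξ hξ η hη hne) haD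
      rw [hzero η a haR haDη]
      ring
    have h3 : ∑ a ∈ (A ∩ D ξ), (y ξ a) ^ 2 ≤ s ^ 2 :=
      hsmall _ (h𝒜.1 A hA _ Finset.inter_subset_left) Finset.inter_subset_right
    rw [hsum, h2]
    linarith
  have keyU : ∀ ξ ∈ S₃, ∀ η ∈ S₃, ξ ≠ η → ∀ s : ℝ, 0 ≤ s →
      (∀ A ∈ 𝒜, A ⊆ D ξ → ∑ a ∈ A, (y ξ a) ^ 2 ≤ s ^ 2) →
      (∀ A ∈ 𝒜, A ⊆ D η → ∑ a ∈ A, (y η a) ^ 2 ≤ s ^ 2) →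
      (∀ A ∈ 𝒜, A ∩ D ξ = ∅ ∨ A ∩ D η = ∅) →
      normA 𝒜 (x ξ - x η) ≤ s + 3 * ε := by
    intro ξ hξ η hη hne s hs hsξ hsη hsplit
    have hybound : ∀ A ∈ 𝒜, ∑ a ∈ A, (y ξ a - y η a) ^ 2 ≤ ε ^ 2 + s ^ 2 := by
      intro A hA
      rcases hsplit A hA with h | h
      · have hc := core η hη ξ hξ hne.symm s hsη A hA h
        calc ∑ a ∈ A, (y ξ a - y η a) ^ 2 = ∑ a ∈ A, (y η a - y ξ a) ^ 2 :=
              Finset.sum_congr rfl fun a _ => by ring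
          _ ≤ _ := hc
      · exact core ξ hξ η hη hne s hsξ A hA h
    have herrpair : ∀ A ∈ 𝒜,
        ∑ a ∈ A, ((x ξ a - y ξ a) - (x η a - y η a)) ^ 2 ≤ (ε + ε) ^ 2 := by
      intro A hA
      refine sum_sq_le_sq_of_parts hε.le hε.le
        (u := fun a => x ξ a - y ξ a) (v := fun a => -(x η a - y η a))
        (fun a _ => by ring) (herr ξ A hA) ?_
      calc ∑ a ∈ A, (-(x η a - y η a)) ^ 2 = ∑ a ∈ A, (x η a - y η a) ^ 2 :=
            Finset.sum_congr rfl fun a _ => by ring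
        _ ≤ ε ^ 2 := herr η A hA
    have hnormle : normA 𝒜 (x ξ - x η) ≤ Real.sqrt (ε ^ 2 + s ^ 2) + (ε + ε) := by
      refine normA_le_of (by positivity) fun A hA => ?_
      refine sum_sq_le_sq_of_parts (Real.sqrt_nonneg _) (by linarith)
        (u := fun a => y ξ a - y η a) (v := fun a => (x ξ a - y ξ a) - (x η a - y η a))
        (fun a _ => by simp only [Pi.sub_apply]; ring) ?_ (herrpair A hA)
      rw [Real.sq_sqrt (by positivity)]
      exact hybound A hA
    have hfin := sqrt_sq_add_sq_le hε.le hs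
    linarith
  -- pairs with disconnected supports satisfy the split hypothesis of keyU
  have hsplit_of_disc : ∀ ξ η, (∀ a ∈ D ξ, ∀ b ∈ D η, ({a, b} : Finset Omega1) ∉ 𝒜) →
      ∀ A ∈ 𝒜, A ∩ D ξ = ∅ ∨ A ∩ D η = ∅ := by
    intro ξ η hdisc A hA
    by_contra h
    push_neg at h
    obtain ⟨a, ha⟩ := h.1
    obtain ⟨b, hb⟩ := h.2
    have hpair : ({a, b} : Finset Omega1) ⊆ A := by
      intro c hc
      rcases Finset.mem_insert.mp hc with rfl | hc
      · exact (Finset.mem_inter.mp ha).1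
      · rw [Finset.mem_singleton.mp hc]; exact (Finset.mem_inter.mp hb).1
    exact hdisc a (Finset.mem_inter.mp ha).2 b (Finset.mem_inter.mp hb).2
      (h𝒜.1 A hA _ hpair)
  -- indices with empty off-root support are countably many
  have hTe : {ξ | ξ ∈ S₃ ∧ D ξ = ∅}.Countable := by
    by_contra hunc
    obtain ⟨ξ, hξ, η, hη, hne⟩ := exists_two_ne hunc
    have h0 : ∀ ζ : Omega1, D ζ = ∅ → ∀ A ∈ 𝒜, A ⊆ D ζ →
        ∑ a ∈ A, (y ζ a) ^ 2 ≤ (0:ℝ) ^ 2 := by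
      intro ζ hζ A _ hsub
      rw [hζ] at hsub
      rw [Finset.subset_empty.mp hsub]
      simp
    have hle := keyU ξ hξ.1 η hη.1 hne 0 le_rfl (h0 ξ hξ.2) (h0 η hη.2)
      (fun A _ => Or.inl (by rw [hξ.2, Finset.inter_empty]))
    have hge := hsep ξ η hne
    linarith
  set S₄ : Set Omega1 := S₃ \ {ξ | ξ ∈ S₃ ∧ D ξ = ∅} with hS₄def
  have hS₄unc : ¬S₄.Countable := not_countable_diff hS₃ hTe
  have hS₄sub : S₄ ⊆ S₃ := Set.diff_subset
  have hS₄ne : ∀ ξ ∈ S₄, D ξ ≠ ∅ := fun ξ hξ h => hξ.2 ⟨hξ.1, h⟩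
  set t : ℝ := 1 - 5 * ε with htdef
  have ht : 0 ≤ t := by rw [htdef]; linarith
  -- indices with small off-root mass are countably many
  have hSmall : {ξ | ξ ∈ S₄ ∧ ∀ A ∈ 𝒜, A ⊆ D ξ →
      ∑ a ∈ A, (y ξ a) ^ 2 ≤ t ^ 2}.Countable := by
    by_contra hunc
    obtain ⟨⟨ξ, hξ, η, hη, hne, hdisc⟩, -⟩ := applyT0 h𝒜 D _ hunc
      (fun ξ hξ => Finset.nonempty_iff_ne_empty.mpr (hS₄ne ξ hξ.1))
      (fun ξ hξ η hη hne => hDdisj ξ (hS₄sub hξ.1) η (hS₄sub hη.1) hne)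
    have hle := keyU ξ (hS₄sub hξ.1) η (hS₄sub hη.1) hne t ht hξ.2 hη.2
      (hsplit_of_disc ξ η hdisc)
    have hge := hsep ξ η hne
    rw [htdef] at hle
    linarith
  set S₅ : Set Omega1 := S₄ \ {ξ | ξ ∈ S₄ ∧ ∀ A ∈ 𝒜, A ⊆ D ξ →
      ∑ a ∈ A, (y ξ a) ^ 2 ≤ t ^ 2} with hS₅def
  have hS₅unc : ¬S₅.Countable := not_countable_diff hS₄unc hSmall
  have hS₅sub : S₅ ⊆ S₄ := Set.diff_subset
  have hS₅S₃ : ∀ ξ ∈ S₅, ξ ∈ S₃ := fun ξ hξ => hS₄sub (hS₅sub hξ)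
  have hS₅big : ∀ ξ ∈ S₅, ∃ A ∈ 𝒜, A ⊆ D ξ ∧ t ^ 2 < ∑ a ∈ A, (y ξ a) ^ 2 := by
    intro ξ hξ
    have h := hξ.2
    simp only [Set.mem_setOf_eq, not_and, not_forall, not_le] at h
    obtain ⟨A, hA, hsub, hlt⟩ := h hξ.1
    exact ⟨A, hA, hsub, hlt⟩
  obtain ⟨⟨ξ₁, hξ₁, η₁, hη₁, hne₁, hdisc₁⟩, ⟨ξ₂, hξ₂, η₂, hη₂, hne₂, hconn₂⟩⟩ :=
    applyT0 h𝒜 D S₅ hS₅unc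
      (fun ξ hξ => Finset.nonempty_iff_ne_empty.mpr (hS₄ne ξ (hS₅sub hξ)))
      (fun ξ hξ η hη hne => hDdisj ξ (hS₅S₃ ξ hξ) η (hS₅S₃ η hη) hne)
  -- second conclusion : the disconnected pair is at distance < 1 + δ
  have hupper : normA 𝒜 (x ξ₁ - x η₁) < 1 + δ := by
    have hle := keyU ξ₁ (hS₅S₃ _ hξ₁) η₁ (hS₅S₃ _ hη₁) hne₁ (1 + ε) (by linarith)
      (fun A hA _ => hy_bdd ξ₁ A hA) (fun A hA _ => hy_bdd η₁ A hA)
      (hsplit_of_disc ξ₁ η₁ hdisc₁)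
    linarith
  -- first conclusion : the connected pair is at distance > √2 - δ
  obtain ⟨Aξ, hAξ, hAξsub, hAξbig⟩ := hS₅big ξ₂ hξ₂
  obtain ⟨Aη, hAη, hAηsub, hAηbig⟩ := hS₅big η₂ hη₂
  have hC𝒜 : Aξ ∪ Aη ∈ 𝒜 := by
    refine h𝒜.2.2.2 _ fun a ha b hb _hab => ?_
    rcases Finset.mem_union.mp ha with ha' | ha' <;>
      rcases Finset.mem_union.mp hb with hb' | hb'
    · refine h𝒜.1 Aξ hAξ _ fun c hc => ?_
      rcases Finset.mem_insert.mp hc with rfl | hc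
      · exact ha'
      · rw [Finset.mem_singleton.mp hc]; exact hb'
    · exact hconn₂ a (hAξsub ha') b (hAηsub hb')
    · rw [Finset.pair_comm]
      exact hconn₂ b (hAξsub hb') a (hAηsub ha')
    · refine h𝒜.1 Aη hAη _ fun c hc => ?_
      rcases Finset.mem_insert.mp hc with rfl | hc
      · exact ha'
      · rw [Finset.mem_singleton.mp hc]; exact hb'
  have hDd₂ := hDdisj ξ₂ (hS₅S₃ _ hξ₂) η₂ (hS₅S₃ _ hη₂) hne₂
  have hdisjA : Disjoint Aξ Aη := hDd₂.mono hAξsub hAηsub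
  have hsum2 : 2 * t ^ 2 < ∑ a ∈ Aξ ∪ Aη, (y ξ₂ a - y η₂ a) ^ 2 := by
    rw [Finset.sum_union hdisjA]
    have e1 : ∑ a ∈ Aξ, (y ξ₂ a - y η₂ a) ^ 2 = ∑ a ∈ Aξ, (y ξ₂ a) ^ 2 := by
      refine Finset.sum_congr rfl fun a ha => ?_
      have haD := hAξsub ha
      rw [hzero η₂ a (Finset.mem_sdiff.mp haD).2 (Finset.disjoint_left.mp hDd₂ haD)]
      ring
    have e2 : ∑ a ∈ Aη, (y ξ₂ a - y η₂ a) ^ 2 = ∑ a ∈ Aη, (y η₂ a) ^ 2 := by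
      refine Finset.sum_congr rfl fun a ha => ?_
      have haD := hAηsub ha
      rw [hzero ξ₂ a (Finset.mem_sdiff.mp haD).2 (Finset.disjoint_right.mp hDd₂ haD)]
      ring
    rw [e1, e2]
    linarith
  set c : ℝ := Real.sqrt (∑ a ∈ Aξ ∪ Aη, (x ξ₂ a - x η₂ a) ^ 2) with hcdef
  have hc0 : 0 ≤ c := Real.sqrt_nonneg _
  have hybx : ∑ a ∈ Aξ ∪ Aη, (y ξ₂ a - y η₂ a) ^ 2 ≤ (c + (ε + ε)) ^ 2 := by
    refine sum_sq_le_sq_of_parts hc0 (by linarith)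
      (u := fun a => x ξ₂ a - x η₂ a) (v := fun a => (y ξ₂ a - x ξ₂ a) - (y η₂ a - x η₂ a))
      (fun a _ => by ring) ?_ ?_
    · exact le_of_eq (Real.sq_sqrt (Finset.sum_nonneg fun a _ => sq_nonneg _)).symm
    · refine sum_sq_le_sq_of_parts hε.le hε.le
        (u := fun a => y ξ₂ a - x ξ₂ a) (v := fun a => -(y η₂ a - x η₂ a))
        (fun a _ => by ring) ?_ ?_
      · calc ∑ a ∈ Aξ ∪ Aη, (y ξ₂ a - x ξ₂ a) ^ 2
            = ∑ a ∈ Aξ ∪ Aη, (x ξ₂ a - y ξ₂ a) ^ 2 :=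
              Finset.sum_congr rfl fun a _ => by ring
          _ ≤ ε ^ 2 := herr ξ₂ _ hC𝒜
      · calc ∑ a ∈ Aξ ∪ Aη, (-(y η₂ a - x η₂ a)) ^ 2
            = ∑ a ∈ Aξ ∪ Aη, (x η₂ a - y η₂ a) ^ 2 :=
              Finset.sum_congr rfl fun a _ => by ring
          _ ≤ ε ^ 2 := herr η₂ _ hC𝒜
  have hsqrt2t : Real.sqrt 2 * t ≤ c + (ε + ε) := by
    have h1 : Real.sqrt (2 * t ^ 2) ≤ Real.sqrt ((c + (ε + ε)) ^ 2) :=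
      Real.sqrt_le_sqrt (le_trans hsum2.le hybx)
    rw [Real.sqrt_sq (by linarith)] at h1
    rw [Real.sqrt_mul (by norm_num) (t ^ 2), Real.sqrt_sq ht] at h1
    exact h1
  have hnormge : c ≤ normA 𝒜 (x ξ₂ - x η₂) := by
    have hgb : ∀ B ∈ 𝒜, ∑ a ∈ B, ((x ξ₂ - x η₂) a) ^ 2 ≤ (1 + 1 : ℝ) ^ 2 := by
      intro B hB
      refine sum_sq_le_sq_of_parts zero_le_one zero_le_one
        (u := x ξ₂) (v := fun a => -(x η₂ a))
        (fun a _ => by simp only [Pi.sub_apply]; ring) ?_ ?_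
      · rw [one_pow]; exact hx1 ξ₂ B hB
      · rw [one_pow]
        calc ∑ a ∈ B, (-(x η₂ a)) ^ 2 = ∑ a ∈ B, (x η₂ a) ^ 2 :=
              Finset.sum_congr rfl fun a _ => by ring
          _ ≤ 1 := hx1 η₂ B hB
    have hle := le_normA_of hC𝒜 hgb
    have hconv : ∑ a ∈ Aξ ∪ Aη, ((x ξ₂ - x η₂) a) ^ 2
        = ∑ a ∈ Aξ ∪ Aη, (x ξ₂ a - x η₂ a) ^ 2 :=
      Finset.sum_congr rfl fun a _ => by simp only [Pi.sub_apply]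
    rw [hconv] at hle
    exact hle
  have hlower : Real.sqrt 2 - δ < normA 𝒜 (x ξ₂ - x η₂) := by
    have h5 : Real.sqrt 2 - 10 * ε ≤ Real.sqrt 2 * t := by
      rw [htdef]
      exact sqrt_two_mul_aux hε.le
    linarith
  constructor
  · rcases lt_or_gt_of_ne hne₂ with h | h
    · exact ⟨ξ₂, η₂, h, hlower⟩
    · exact ⟨η₂, ξ₂, h, by rw [normA_sub_comm]; exact hlower⟩
  · rcases lt_or_gt_of_ne hne₁ with h | h
    · exact ⟨ξ₁, η₁, h, hupper⟩
    · exact ⟨η₁, ξ₁, h, by rw [normA_sub_comm]; exact hupper⟩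
end
end

section
/- Let 𝒜 be a family of finite subsets of ω₁ closed under subsets and containing all singletons, and suppose (y_n)_{n∈ℕ} ⊆ c_00(ω₁) are norm-one vectors (‖y_n‖_𝒜 = 1) with pairwise disjoint supports such that: (i) each y_n has a subset B_n ⊆ supp(y_n) with B_n ∈ 𝒜 and sqrt(Σ_{α∈B_n} y_n(α)²) ≥ 1/2, and (ii) every finite subset of ⋃_n B_n belongs to 𝒜. Then for all m ∈ ℕ and scalars c_0, …, c_{m−1}, (1/2)·sqrt(Σ_{n<m} c_n²) ≤ ‖Σ_{n<m} c_n y_n‖_𝒜 ≤ sqrt(Σ_{n<m} c_n²). Hence (y_n) is equivalent to the unit vector basis of ℓ₂. -/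
noncomputable section

/-- disjointly supported norm-one vectors `y n` carrying sets
`B n ∈ 𝒜` of mass `≥ 1/2`, with `⋃ B n` all of whose finite subsets are in `𝒜`,
are 2-equivalent to the unit vector basis of `ℓ₂`. -/
theorem stmt13 (𝒜 : Set (Finset Omega1)) (h𝒜 : IsGoodFamily 𝒜)
    (y : ℕ → Omega1 → ℝ)
    (hfin : ∀ n, (Function.support (y n)).Finite)
    (hdisj : ∀ n m : ℕ, n ≠ m →
      Disjoint (Function.support (y n)) (Function.support (y m)))
    (hnorm : ∀ n, normA 𝒜 (y n) = 1)
    (B : ℕ → Finset Omega1)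
    (hBsupp : ∀ n, (↑(B n) : Set Omega1) ⊆ Function.support (y n))
    (hBA : ∀ n, B n ∈ 𝒜)
    (hBmass : ∀ n, (1 : ℝ) / 2 ≤ Real.sqrt (∑ α ∈ B n, (y n α) ^ 2))
    (hunion : ∀ s : Finset Omega1,
      (↑s : Set Omega1) ⊆ ⋃ n : ℕ, (↑(B n) : Set Omega1) → s ∈ 𝒜) :
    ∀ (m : ℕ) (c : ℕ → ℝ),
      (1 / 2) * Real.sqrt (∑ n ∈ Finset.range m, (c n) ^ 2) ≤
          normA 𝒜 (∑ n ∈ Finset.range m, c n • y n) ∧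
        normA 𝒜 (∑ n ∈ Finset.range m, c n • y n) ≤
          Real.sqrt (∑ n ∈ Finset.range m, (c n) ^ 2) := by
  intro m c
  set x : Omega1 → ℝ := ∑ n ∈ Finset.range m, c n • y n with hx
  have hxval : ∀ α, x α = ∑ n ∈ Finset.range m, c n * y n α := by
    intro α; simp [hx, Finset.sum_apply]
  have hzero : ∀ n, ∀ k, k ≠ n → ∀ α : Omega1, y n α ≠ 0 → y k α = 0 := by
    intro n k hk α hα
    by_contra hk0
    exact Set.disjoint_left.1 (hdisj k n hk) hk0 hα
  have hpt : ∀ α, (x α) ^ 2 = ∑ n ∈ Finset.range m, (c n) ^ 2 * (y n α) ^ 2 := by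
    intro α
    by_cases h : ∃ n ∈ Finset.range m, y n α ≠ 0
    · obtain ⟨n0, hn0, hne⟩ := h
      rw [hxval,
        Finset.sum_eq_single_of_mem n0 hn0
          (fun k _ hkne => by rw [hzero n0 k hkne α hne]; ring),
        Finset.sum_eq_single_of_mem n0 hn0
          (fun k _ hkne => by rw [hzero n0 k hkne α hne]; ring)]
      ring
    · push_neg at h
      rw [hxval, Finset.sum_eq_zero (fun k hk => by rw [h k hk]; ring),
        Finset.sum_eq_zero (fun k hk => by rw [h k hk]; ring)]
      norm_num
  have hsum : ∀ A : Finset Omega1,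
      ∑ α ∈ A, (x α) ^ 2
        = ∑ n ∈ Finset.range m, (c n) ^ 2 * ∑ α ∈ A, (y n α) ^ 2 := by
    intro A
    simp_rw [hpt, Finset.mul_sum]
    rw [Finset.sum_comm]
  have hSn_bdd : ∀ n, BddAbove
      {r : ℝ | ∃ A ∈ 𝒜, r = Real.sqrt (∑ α ∈ A, (y n α) ^ 2)} := by
    intro n
    by_contra h
    have h0 := Real.sSup_of_not_bddAbove h
    have h1 := hnorm n
    unfold normA at h1
    rw [h0] at h1
    norm_num at h1
  have hyA : ∀ n, ∀ A ∈ 𝒜, ∑ α ∈ A, (y n α) ^ 2 ≤ 1 := by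
    intro n A hA
    have hnn : (0 : ℝ) ≤ ∑ α ∈ A, (y n α) ^ 2 :=
      Finset.sum_nonneg fun _ _ => sq_nonneg _
    have h1 : Real.sqrt (∑ α ∈ A, (y n α) ^ 2) ≤ 1 := by
      have h2 := le_csSup (hSn_bdd n)
        (show Real.sqrt (∑ α ∈ A, (y n α) ^ 2) ∈
          {r : ℝ | ∃ A ∈ 𝒜, r = Real.sqrt (∑ α ∈ A, (y n α) ^ 2)} from ⟨A, hA, rfl⟩)
      calc Real.sqrt (∑ α ∈ A, (y n α) ^ 2) ≤ _ := h2
        _ = 1 := hnorm n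
    nlinarith [Real.sq_sqrt hnn, Real.sqrt_nonneg (∑ α ∈ A, (y n α) ^ 2)]
  have hxA : ∀ A ∈ 𝒜, ∑ α ∈ A, (x α) ^ 2 ≤ ∑ n ∈ Finset.range m, (c n) ^ 2 := by
    intro A hA
    rw [hsum A]
    calc ∑ n ∈ Finset.range m, (c n) ^ 2 * ∑ α ∈ A, (y n α) ^ 2
        ≤ ∑ n ∈ Finset.range m, (c n) ^ 2 * 1 :=
          Finset.sum_le_sum fun n _ =>
            mul_le_mul_of_nonneg_left (hyA n A hA) (sq_nonneg _)
      _ = ∑ n ∈ Finset.range m, (c n) ^ 2 := by simp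
  have hSx_bdd : BddAbove {r : ℝ | ∃ A ∈ 𝒜, r = Real.sqrt (∑ α ∈ A, (x α) ^ 2)} := by
    refine ⟨Real.sqrt (∑ n ∈ Finset.range m, (c n) ^ 2), ?_⟩
    rintro r ⟨A, hA, rfl⟩
    exact Real.sqrt_le_sqrt (hxA A hA)
  have hupper : normA 𝒜 x ≤ Real.sqrt (∑ n ∈ Finset.range m, (c n) ^ 2) := by
    apply Real.sSup_le
    · rintro r ⟨A, hA, rfl⟩
      exact Real.sqrt_le_sqrt (hxA A hA)
    · exact Real.sqrt_nonneg _
  refine ⟨?_, hupper⟩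
  -- lower bound
  set A0 : Finset Omega1 := (Finset.range m).biUnion B with hA0def
  have hA0 : A0 ∈ 𝒜 := by
    apply hunion
    intro α hα
    simp only [hA0def, Finset.coe_biUnion, Set.mem_iUnion] at hα
    obtain ⟨n, _, hn2⟩ := hα
    exact Set.mem_iUnion.2 ⟨n, hn2⟩
  have hBdisj : ∀ n ∈ Finset.range m, ∀ k ∈ Finset.range m, n ≠ k →
      Disjoint (B n) (B k) := by
    intro n _ k _ hnk
    rw [Finset.disjoint_left]
    intro α hαn hαk
    exact Set.disjoint_left.1 (hdisj n k hnk) (hBsupp n hαn) (hBsupp k hαk)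
  have hsplit : ∑ α ∈ A0, (x α) ^ 2 = ∑ n ∈ Finset.range m, ∑ α ∈ B n, (x α) ^ 2 :=
    Finset.sum_biUnion (fun n hn k hk hnk => hBdisj n hn k hk hnk)
  have hinner : ∀ n ∈ Finset.range m,
      (1 / 4 : ℝ) * (c n) ^ 2 ≤ ∑ α ∈ B n, (x α) ^ 2 := by
    intro n hn
    have hBn : ∀ α ∈ B n, (x α) ^ 2 = (c n) ^ 2 * (y n α) ^ 2 := by
      intro α hα
      have hne : y n α ≠ 0 := hBsupp n hα
      rw [hpt α, Finset.sum_eq_single_of_mem n hn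
        (fun k _ hkne => by rw [hzero n k hkne α hne]; ring)]
    rw [Finset.sum_congr rfl hBn, ← Finset.mul_sum]
    have hnn : (0 : ℝ) ≤ ∑ α ∈ B n, (y n α) ^ 2 :=
      Finset.sum_nonneg fun _ _ => sq_nonneg _
    have hm := hBmass n
    have hs : (1 / 4 : ℝ) ≤ ∑ α ∈ B n, (y n α) ^ 2 := by
      nlinarith [Real.sq_sqrt hnn, Real.sqrt_nonneg (∑ α ∈ B n, (y n α) ^ 2)]
    have h5 := mul_le_mul_of_nonneg_left hs (sq_nonneg (c n))
    linarith
  have hlow : (1 / 4 : ℝ) * ∑ n ∈ Finset.range m, (c n) ^ 2 ≤ ∑ α ∈ A0, (x α) ^ 2 := by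
    rw [hsplit, Finset.mul_sum]
    exact Finset.sum_le_sum hinner
  have hmem : Real.sqrt (∑ α ∈ A0, (x α) ^ 2) ∈
      {r : ℝ | ∃ A ∈ 𝒜, r = Real.sqrt (∑ α ∈ A, (x α) ^ 2)} := ⟨A0, hA0, rfl⟩
  have hle : Real.sqrt (∑ α ∈ A0, (x α) ^ 2) ≤ normA 𝒜 x := le_csSup hSx_bdd hmem
  have hcalc : (1 / 2 : ℝ) * Real.sqrt (∑ n ∈ Finset.range m, (c n) ^ 2)
      ≤ Real.sqrt (∑ α ∈ A0, (x α) ^ 2) := by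
    have h4 : Real.sqrt ((1 / 4 : ℝ) * ∑ n ∈ Finset.range m, (c n) ^ 2)
        = (1 / 2 : ℝ) * Real.sqrt (∑ n ∈ Finset.range m, (c n) ^ 2) := by
      rw [Real.sqrt_mul (by norm_num) _,
        show (1 / 4 : ℝ) = (1 / 2) ^ 2 by norm_num, Real.sqrt_sq (by norm_num)]
    rw [← h4]
    exact Real.sqrt_le_sqrt hlow
  linarith
end
end

section
/- Let c : [ω₁]² → I × J with 0, 1 ∈ I be a T-coloring, and define 𝒜_c = {a ∈ [ω₁]^{<ω} : c₀ is constantly 0 on pairs from a} and ℬ_c = {a ∈ [ω₁]^{<ω} : c₀ is constantly 1 on pairs from a}. Then 𝒜_c and ℬ_c are T-families. -/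
noncomputable section

/-- `c` is a T-coloring: on every uncountable pairwise disjoint family of pairs,
every pair of values is attained coherently. -/
def IsTColoring {I J : Type} (c : Omega1 → Omega1 → I × J) : Prop :=
  ∀ a b : Omega1 → Omega1, PairwiseDisjointPairs a b →
    ∀ v w : I × J, ∃ ξ η : Omega1, ξ < η ∧
      c (a ξ) (a η) = v ∧ c (b ξ) (b η) = w

/-- The family of finite sets all of whose pairs get first color `i`. -/
def famOf {I J : Type} (c : Omega1 → Omega1 → I × J) (i : I) :
    Set (Finset Omega1) :=
  {s : Finset Omega1 | ∀ α ∈ s, ∀ β ∈ s, α ≠ β → (c α β).1 = i}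

section AuxDM
open Cardinal Set

lemma bigOfNotCountable {X : Type} {s : Set X} (h : ¬ s.Countable) : ℵ₁ ≤ #s := by
  rw [Cardinal.countable_iff_lt_aleph_one] at h
  exact not_lt.1 h

lemma cardOmega1 : #Omega1 = ℵ₁ := by
  rw [Cardinal.mk_toType, Ordinal.card_omega]

/-- Zorn part: if all neighborhoods are countable, there is an uncountable independent set. -/
lemma existsAnti (X : Type) (hX : ℵ₁ ≤ #X) (G : X → X → Prop)
    (hGs : ∀ x y, G x y → G y x)
    (hsmall : ∀ x : X, {y : X | G x y}.Countable) :
    ∃ U : Set X, ¬ U.Countable ∧ ∀ x ∈ U, ∀ y ∈ U, x ≠ y → ¬ G x y := by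
  set S : Set (Set X) := {U | ∀ x ∈ U, ∀ y ∈ U, x ≠ y → ¬ G x y} with hS
  have hzorn : ∀ cc ⊆ S, IsChain (· ⊆ ·) cc → ∃ ub ∈ S, ∀ s ∈ cc, s ⊆ ub := by
    intro cc hccS hchain
    refine ⟨⋃₀ cc, ?_, fun s hs => Set.subset_sUnion_of_mem hs⟩
    intro u hu v hv huv
    obtain ⟨s, hs, hus⟩ := hu
    obtain ⟨t, ht, hvt⟩ := hv
    rcases eq_or_ne s t with rfl | hst
    · exact hccS hs u hus v hvt huv
    · rcases hchain hs ht hst with h | h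
      · exact hccS ht u (h hus) v hvt huv
      · exact hccS hs u hus v (h hvt) huv
  obtain ⟨M, hM⟩ := zorn_subset S hzorn
  refine ⟨M, ?_, hM.1⟩
  intro hMc
  have hbig : (M ∪ ⋃ x ∈ M, {y | G x y}).Countable :=
    hMc.union (hMc.biUnion fun x _ => hsmall x)
  have hex : ∃ y : X, y ∉ M ∪ ⋃ x ∈ M, {y | G x y} := by
    by_contra h
    push_neg at h
    have huniv : (univ : Set X).Countable := hbig.mono (fun y _ => h y)
    have := (Cardinal.countable_iff_lt_aleph_one _).1 huniv
    rw [Cardinal.mk_univ] at this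
    exact absurd (hX.trans_lt this) (lt_irrefl _)
  obtain ⟨y, hy⟩ := hex
  have hyM : y ∉ M := fun h => hy (Or.inl h)
  have hins : insert y M ∈ S := by
    intro u hu v hv huv
    rcases Set.mem_insert_iff.1 hu with hu' | hu' <;>
      rcases Set.mem_insert_iff.1 hv with hv' | hv'
    · exact absurd (hu'.trans hv'.symm) huv
    · exact fun hG => hy (Or.inr (Set.mem_biUnion hv' (hGs _ _ (hu' ▸ hG))))
    · exact fun hG => hy (Or.inr (Set.mem_biUnion hu' (hv' ▸ hG)))
    · exact hM.1 u hu' v hv' huv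
  have hsub : insert y M ⊆ M := hM.2 hins (Set.subset_insert y M)
  exact hyM (hsub (Set.mem_insert y M))

/-- Finite Dushnik–Miller: either a k-clique or an uncountable independent set. -/
lemma dmFinite : ∀ (k : ℕ) (X : Type), ℵ₁ ≤ #X → ∀ (G : X → X → Prop),
    (∀ x y, G x y → G y x) →
    (∃ s : Finset X, s.card = k ∧ ∀ x ∈ s, ∀ y ∈ s, x ≠ y → G x y) ∨
    (∃ U : Set X, ¬ U.Countable ∧ ∀ x ∈ U, ∀ y ∈ U, x ≠ y → ¬ G x y) := by
  intro k
  induction k with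
  | zero => intro X hX G hGs; exact Or.inl ⟨∅, by simp⟩
  | succ k ih =>
    intro X hX G hGs
    by_cases hA : ∃ α : X, ¬ {y : X | y ≠ α ∧ G α y}.Countable
    · obtain ⟨α, hα⟩ := hA
      set N : Set X := {y : X | y ≠ α ∧ G α y} with hN
      have hNcard : ℵ₁ ≤ #N := bigOfNotCountable hα
      rcases ih (↥N) hNcard (fun u v => G u.1 v.1) (fun u v h => hGs _ _ h) with
        ⟨s, hsc, hs⟩ | ⟨U, hU, hUa⟩
      · classical
        refine Or.inl ⟨insert α (s.image Subtype.val), ?_, ?_⟩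
        · have hninsert : α ∉ s.image Subtype.val := by
            intro h
            obtain ⟨u, _, hu⟩ := Finset.mem_image.1 h
            exact u.2.1 hu
          rw [Finset.card_insert_of_notMem hninsert,
            Finset.card_image_of_injective s Subtype.val_injective, hsc]
        · intro x hx y hy hxy
          rcases Finset.mem_insert.1 hx with rfl | hx <;>
            rcases Finset.mem_insert.1 hy with rfl | hy
          · exact absurd rfl hxy
          · obtain ⟨v, hv, rfl⟩ := Finset.mem_image.1 hy
            exact v.2.2
          · obtain ⟨u, hu, rfl⟩ := Finset.mem_image.1 hx
            exact hGs _ _ u.2.2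
          · obtain ⟨u, hu, rfl⟩ := Finset.mem_image.1 hx
            obtain ⟨v, hv, rfl⟩ := Finset.mem_image.1 hy
            exact hs u hu v hv (fun h => hxy (congrArg Subtype.val h))
      · refine Or.inr ⟨Subtype.val '' U, ?_, ?_⟩
        · intro h
          exact hU ((h.preimage Subtype.val_injective).mono
            (fun u hu => Set.mem_preimage.2 (Set.mem_image_of_mem _ hu)))
        · rintro x ⟨u, hu, rfl⟩ y ⟨v, hv, rfl⟩ hxy
          exact hUa u hu v hv (fun h => hxy (congrArg Subtype.val h))
    · push_neg at hA
      have hsmall : ∀ x : X, {y : X | G x y}.Countable := by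
        intro x
        have : {y : X | G x y} ⊆ insert x {y : X | y ≠ x ∧ G x y} := by
          intro y hy
          rcases eq_or_ne y x with rfl | h
          · exact Set.mem_insert _ _
          · exact Set.mem_insert_of_mem _ ⟨h, hy⟩
        exact ((hA x).insert x).mono this
      exact Or.inr (existsAnti X hX G hGs hsmall)


/-- if `c` is a T-coloring then `𝒜_c` and `ℬ_c` are T-families. -/
theorem stmt17 {I J : Type} (i0 i1 : I) (h01 : i0 ≠ i1) (hJ : Nonempty J)
    (c : Omega1 → Omega1 → I × J)
    (hsym : ∀ α β : Omega1, c α β = c β α)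
    (hT : IsTColoring c) :
    IsTFamilies (famOf c i0) (famOf c i1) := by
  classical
  refine ⟨?_, ?_, ?_, ?_, ?_⟩
  · intro A hA B hBA α hα β hβ hne
    exact hA α (hBA hα) β (hBA hβ) hne
  · intro A hA B hBA α hα β hβ hne
    exact hA α (hBA hα) β (hBA hβ) hne
  · intro α
    refine ⟨{α}, ?_, Finset.mem_singleton_self α⟩
    intro β hβ γ hγ hne
    rw [Finset.mem_singleton] at hβ hγ
    exact absurd (hβ.trans hγ.symm) hne
  · intro A hA
    by_contra h
    push_neg at h
    obtain ⟨x, hx, y, hy, hxy⟩ := Finset.one_lt_card.1 h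
    exact h01 ((hA.1 x hx y hy hxy).symm.trans (hA.2 x hx y hy hxy))
  · intro a b hab k
    obtain ⟨j⟩ := hJ
    set G : Omega1 → Omega1 → Prop :=
      fun ξ η => (c (a ξ) (a η)).1 = i0 ∧ (c (b ξ) (b η)).1 = i1 with hG
    have hGs : ∀ ξ η, G ξ η → G η ξ := by
      intro ξ η h
      exact ⟨by rw [hsym]; exact h.1, by rw [hsym]; exact h.2⟩
    have hX : ℵ₁ ≤ #Omega1 := cardOmega1.ge
    have hainj : ∀ ξ η : Omega1, ξ ≠ η → a ξ ≠ a η := by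
      intro ξ η hne h
      have h2 := hab.2 ξ η hne
      have hmem : a ξ ∈ ({a ξ, b ξ} : Set Omega1) ∩ ({a η, b η} : Set Omega1) :=
        ⟨Or.inl rfl, Or.inl h⟩
      rw [h2] at hmem
      exact hmem
    have hbinj : ∀ ξ η : Omega1, ξ ≠ η → b ξ ≠ b η := by
      intro ξ η hne h
      have h2 := hab.2 ξ η hne
      have hmem : b ξ ∈ ({a ξ, b ξ} : Set Omega1) ∩ ({a η, b η} : Set Omega1) :=
        ⟨Or.inr rfl, Or.inr h⟩
      rw [h2] at hmem
      exact hmem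
    rcases dmFinite k Omega1 hX G hGs with ⟨s, hsc, hs⟩ | ⟨U, hU, hUa⟩
    · refine ⟨s, hsc, ?_, ?_, ?_, ?_⟩
      · intro α hα β hβ hne
        obtain ⟨ξ, hξ, rfl⟩ := Finset.mem_image.1 hα
        obtain ⟨η, hη, rfl⟩ := Finset.mem_image.1 hβ
        exact (hs ξ hξ η hη (fun h => hne (congrArg a h))).1
      · intro α hα β hβ hne
        obtain ⟨ξ, hξ, rfl⟩ := Finset.mem_image.1 hα
        obtain ⟨η, hη, rfl⟩ := Finset.mem_image.1 hβ
        exact (hs ξ hξ η hη (fun h => hne (congrArg b h))).2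
      · intro ξ _ η _ h
        by_contra hne
        exact hainj ξ η hne h
      · intro ξ _ η _ h
        by_contra hne
        exact hbinj ξ η hne h
    · exfalso
      have hUcard : #Omega1 ≤ #(↥U) := cardOmega1.le.trans (bigOfNotCountable hU)
      obtain ⟨f⟩ := (Cardinal.le_def _ _).1 hUcard
      have hfinj : ∀ ξ η : Omega1, ξ ≠ η → (f ξ : Omega1) ≠ (f η : Omega1) := by
        intro ξ η hne h
        exact hne (f.injective (Subtype.val_injective h))
      have hab' : PairwiseDisjointPairs (fun ξ => a (f ξ)) (fun ξ => b (f ξ)) :=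
        ⟨fun ξ => hab.1 _, fun ξ η hne => hab.2 _ _ (hfinj ξ η hne)⟩
      obtain ⟨ξ, η, hlt, h1, h2⟩ := hT _ _ hab' (i0, j) (i1, j)
      exact hUa (f ξ) (f ξ).2 (f η) (f η).2 (hfinj ξ η hlt.ne)
        ⟨congrArg Prod.fst h1, congrArg Prod.fst h2⟩

end AuxDM
end
end

section
/- Let X be a nonseparable Banach space with a linearly dense subset Y' ⊆ X such that for every x* ∈ X*, the set {y ∈ Y' : x*(y) ≠ 0} is countable, and assume X ⊆ ℝ^{ω₁} consists of functions with countable support where coordinate evaluations are continuous functionals. Then there exists a transfinite sequence (y_ξ)_{ξ<ω₁} of nonzero vectors in Y' with pairwise disjoint supports. -/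
noncomputable section

instance : IsWellOrder Omega1 (· < ·) := isWellOrder_lt

open Cardinal Ordinal in
lemma countable_Iio_omega1 (η : Omega1) : (Set.Iio η).Countable := by
  have hlt : Ordinal.typein (α := Omega1) (· < ·) η < ω_ 1 := Ordinal.typein_lt_self η
  have hcard : (Ordinal.typein (α := Omega1) (· < ·) η).card < ℵ₁ :=
    Cardinal.lt_ord.mp (by rwa [Cardinal.ord_aleph])
  have hIc : (Set.Iio (Ordinal.typein (α := Omega1) (· < ·) η)).Countable := by
    rw [Cardinal.countable_iff_lt_aleph_one, Ordinal.mk_Iio_ordinal]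
    simpa using Cardinal.lift_lt.{0,1}.mpr hcard
  have heq : Set.Iio η = (Ordinal.typein (α := Omega1) (· < ·)) ⁻¹'
      Set.Iio (Ordinal.typein (α := Omega1) (· < ·) η) := by
    ext ξ
    simp [Ordinal.typein_lt_typein]
  rw [heq]
  exact hIc.preimage (Ordinal.typein_injective _)

/-- in a nonseparable Banach space of countably supported functions
on `ω₁` with continuous coordinates, a linearly dense set on which every functional
is countably supported yields `ω₁` many nonzero vectors with pairwise disjoint
supports. -/
theorem stmt19 (X : Type) [NormedAddCommGroup X] [NormedSpace ℝ X]
    [CompleteSpace X]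
    (T : X →ₗ[ℝ] (Omega1 → ℝ)) (hTinj : Function.Injective T)
    (hTcont : ∀ α : Omega1, Continuous fun v : X => T v α)
    (hTsupp : ∀ v : X, (Function.support (T v)).Countable)
    (hns : ¬ TopologicalSpace.SeparableSpace X)
    (Y' : Set X)
    (hdense : (Submodule.span ℝ Y').topologicalClosure = ⊤)
    (hctble : ∀ f : X →L[ℝ] ℝ, {y ∈ Y' | f y ≠ 0}.Countable) :
    ∃ y : Omega1 → X, (∀ ξ, y ξ ∈ Y') ∧ (∀ ξ, y ξ ≠ 0) ∧
      ∀ ξ η : Omega1, ξ ≠ η →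
        Disjoint (Function.support (T (y ξ))) (Function.support (T (y η))) := by
  -- key extraction lemma
  have key : ∀ S : Set Omega1, S.Countable →
      ∃ v : X, v ∈ Y' ∧ v ≠ 0 ∧ ∀ α ∈ S, T v α = 0 := by
    intro S hS
    by_contra hcon
    push_neg at hcon
    have hY : Y' ⊆ {(0 : X)} ∪ ⋃ α ∈ S, {y ∈ Y' | T y α ≠ 0} := by
      intro v hv
      by_cases h0 : v = 0
      · exact Or.inl h0
      · obtain ⟨α, hα, hne⟩ := hcon v hv h0
        exact Or.inr (Set.mem_biUnion hα ⟨hv, hne⟩)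
    have hYc : Y'.Countable := by
      refine Set.Countable.mono hY ?_
      refine (Set.countable_singleton _).union (hS.biUnion fun α _ => ?_)
      exact hctble (ContinuousLinearMap.mk ((LinearMap.proj α).comp T) (hTcont α))
    have hsep : TopologicalSpace.IsSeparable (Set.univ : Set X) := by
      have h1 := (hYc.isSeparable).span (R := ℝ)
      have h2 := h1.closure
      rwa [← Submodule.topologicalClosure_coe, hdense, Submodule.top_coe] at h2
    exact hns (TopologicalSpace.isSeparable_univ_iff.mp hsep)
  have hcnt : ∀ (η : Omega1) (g : ∀ ξ : Omega1, ξ < η → X),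
      (⋃ ξ : Set.Iio η, Function.support (T (g ξ.1 ξ.2))).Countable := by
    intro η g
    haveI := (countable_Iio_omega1 η).to_subtype
    exact Set.countable_iUnion fun ξ => hTsupp _
  set F : ∀ η : Omega1, (∀ ξ : Omega1, ξ < η → X) → X := fun η g =>
    (key _ (hcnt η g)).choose with hF
  have wf : WellFounded ((· < ·) : Omega1 → Omega1 → Prop) := wellFounded_lt
  set y : Omega1 → X := wf.fix F with hy
  have hyeq : ∀ η, y η = F η fun ξ _ => y ξ := fun η => wf.fix_eq F η
  have spec : ∀ η, y η ∈ Y' ∧ y η ≠ 0 ∧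
      ∀ α ∈ ⋃ ξ : Set.Iio η, Function.support (T (y ξ.1)), T (y η) α = 0 := by
    intro η
    have h := (key _ (hcnt η fun ξ _ => y ξ)).choose_spec
    rw [hyeq η]
    exact h
  have hdisj : ∀ ξ η : Omega1, ξ < η →
      Disjoint (Function.support (T (y ξ))) (Function.support (T (y η))) := by
    intro ξ η hlt
    rw [Set.disjoint_left]
    intro α hα hα'
    exact hα' ((spec η).2.2 α (Set.mem_iUnion.mpr ⟨⟨ξ, hlt⟩, hα⟩))
  refine ⟨y, fun ξ => (spec ξ).1, fun ξ => (spec ξ).2.1, fun ξ η hne => ?_⟩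
  rcases hne.lt_or_gt with h | h
  · exact hdisj ξ η h
  · exact (hdisj η ξ h).symm
end
end
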